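/- arXiv:1309.2047 — 5 statements merged into one kernel-verified Lean document; each statement's English description precedes it below -/
import Mathlib

section
/- The diameter graph of a finite planar point set contains no even cycle: let X ⊆ ℝ² be a finite set with at least two points and let D(X) = max A(X) be its diameter. Then for every k ≥ 2 there do not exist 2k pairwise distinct points P₁, P₂, …, P_{2k} ∈ X with dist(P_i, P_{i+1}) = D(X) for all i = 1, …, 2k (indices taken cyclically, so P_{2k+1} = P₁). -/
private abbrev E2 := EuclideanSpace ℝ (Fin 2)

private lemma aux_dist_seg_le {b c d y : E2} {D : ℝ} (hy : y ∈ segment ℝ c d)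
    (h1 : dist b c ≤ D) (h2 : dist b d ≤ D) : dist b y ≤ D := by
  obtain ⟨u, v, hu, hv, huv, rfl⟩ := hy
  have hb : b - (u • c + v • d) = u • (b - c) + v • (b - d) := by
    rw [smul_sub, smul_sub]
    nth_rewrite 1 [show b = u • b + v • b by rw [← add_smul, huv, one_smul]]
    abel
  rw [dist_eq_norm, hb]
  calc ‖u • (b - c) + v • (b - d)‖ ≤ ‖u • (b - c)‖ + ‖v • (b - d)‖ := norm_add_le _ _
    _ = u * dist b c + v * dist b d := by
        rw [norm_smul, norm_smul, Real.norm_of_nonneg hu, Real.norm_of_nonneg hv,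
          dist_eq_norm, dist_eq_norm]
    _ ≤ u * D + v * D := by
        gcongr
    _ = D := by rw [← add_mul, huv, one_mul]

private lemma aux_cross_pair {a b c d x : E2} {D : ℝ}
    (hx1 : x ∈ segment ℝ a c) (hx2 : x ∈ segment ℝ b d)
    (hab : dist a b = D) (hcd : dist c d = D)
    (hac : dist a c ≤ D) (hbd : dist b d ≤ D) :
    x ∈ segment ℝ a b ∧ x ∈ segment ℝ c d := by
  have e1 := dist_add_dist_of_mem_segment hx1
  have e2 := dist_add_dist_of_mem_segment hx2
  have t1 := dist_triangle a x b
  have t2 := dist_triangle c x d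
  have c1 : dist x b = dist b x := dist_comm _ _
  have c2 : dist x c = dist c x := dist_comm _ _
  have h1 : dist a x + dist x b = dist a b := by linarith
  have h2 : dist c x + dist x d = dist c d := by linarith
  exact ⟨mem_segment_iff_wbtw.mpr (dist_add_dist_eq_iff.mp h1),
    mem_segment_iff_wbtw.mpr (dist_add_dist_eq_iff.mp h2)⟩

private lemma aux_tri {a b c d : E2} {D : ℝ}
    (ha : a ∈ convexHull ℝ ({b, c, d} : Set E2))
    (hab : dist a b = D) (hbc : dist b c ≤ D) (hbd : dist b d ≤ D) :
    a ∈ segment ℝ c d := by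
  rw [show ({b, c, d} : Set E2) = insert b {c, d} from rfl,
    convexHull_insert (Set.insert_nonempty c {d}), mem_convexJoin] at ha
  obtain ⟨b', hb', y, hy, hseg⟩ := ha
  rw [Set.mem_singleton_iff] at hb'
  rw [hb'] at hseg
  rw [convexHull_pair] at hy
  have e := dist_add_dist_of_mem_segment hseg
  have hby : dist b y ≤ D := aux_dist_seg_le hy hbc hbd
  have hba : dist b a = D := by rw [dist_comm]; exact hab
  have hay : dist a y ≤ 0 := by linarith
  have : a = y := by rwa [dist_le_zero] at hay
  rwa [this]

set_option maxHeartbeats 2000000 in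
private lemma aux_cross {a b c d : E2} {D : ℝ}
    (hab : dist a b = D) (hcd : dist c d = D)
    (hac : dist a c ≤ D) (had : dist a d ≤ D)
    (hbc : dist b c ≤ D) (hbd : dist b d ≤ D)
:
    ∃ x, x ∈ segment ℝ a b ∧ x ∈ segment ℝ c d := by
  set f : Fin 4 → E2 := ![a, b, c, d] with hfdef
  have hdep : ¬ AffineIndependent ℝ f := by
    intro h
    have h3 : Module.finrank ℝ (vectorSpan ℝ (Set.range f)) = 3 :=
      h.finrank_vectorSpan (by simp)
    have hle := Submodule.finrank_le (vectorSpan ℝ (Set.range f))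
    rw [h3] at hle
    simp [finrank_euclideanSpace] at hle
  obtain ⟨I, x, hx⟩ := Convex.radon_partition hdep
  obtain ⟨hxI, hxIc⟩ := hx
  have h4 : ∀ i : Fin 4, i = 0 ∨ i = 1 ∨ i = 2 ∨ i = 3 := by decide
  have f0 : f 0 = a := rfl
  have f1 : f 1 = b := rfl
  have f2 : f 2 = c := rfl
  have f3 : f 3 = d := rfl
  have mem0 : ∀ S : Set (Fin 4), x ∈ convexHull ℝ (f '' S) →
      (∀ i : Fin 4, i ∈ S → False) → False := by
    intro S hxS h
    have hS : f '' S = ∅ := by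
      ext y; simp only [Set.mem_image, Set.mem_empty_iff_false, iff_false, not_exists]
      rintro i ⟨hi, rfl⟩
      exact h i hi
    rw [hS, convexHull_empty] at hxS
    exact hxS
  have mem1 : ∀ (p : E2) (S : Set (Fin 4)), x ∈ convexHull ℝ (f '' S) →
      (∀ i ∈ S, f i = p) → x = p := by
    intro p S hxS h
    have hx1 : x ∈ convexHull ℝ ({p} : Set E2) := by
      refine convexHull_mono ?_ hxS
      rintro y ⟨i, hi, rfl⟩
      simp [h i hi]
    simpa using hx1
  have mem2 : ∀ (p q : E2) (S : Set (Fin 4)), x ∈ convexHull ℝ (f '' S) →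
      (∀ i ∈ S, f i = p ∨ f i = q) → x ∈ segment ℝ p q := by
    intro p q S hxS h
    rw [← convexHull_pair]
    refine convexHull_mono ?_ hxS
    rintro y ⟨i, hi, rfl⟩
    rcases h i hi with h' | h' <;> simp [h']
  have mem3 : ∀ (p q r : E2) (S : Set (Fin 4)), x ∈ convexHull ℝ (f '' S) →
      (∀ i ∈ S, f i = p ∨ f i = q ∨ f i = r) → x ∈ convexHull ℝ ({p, q, r} : Set E2) := by
    intro p q r S hxS h
    refine convexHull_mono ?_ hxS
    rintro y ⟨i, hi, rfl⟩
    rcases h i hi with h' | h' | h' <;> simp [h']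
  have hdc : dist d c = D := by rw [dist_comm]; exact hcd
  have hba : dist b a = D := by rw [dist_comm]; exact hab
  by_cases h0 : (0 : Fin 4) ∈ I <;> by_cases h1 : (1 : Fin 4) ∈ I <;>
    by_cases h2 : (2 : Fin 4) ∈ I <;> by_cases h3 : (3 : Fin 4) ∈ I
  · exact absurd (mem0 Iᶜ hxIc (by
      intro i hi; rcases h4 i with rfl | rfl | rfl | rfl <;>
        first
          | exact absurd hi h0 | exact absurd hi h1 | exact absurd hi h2 | exact absurd hi h3
          | exact absurd h0 hi | exact absurd h1 hi | exact absurd h2 hi | exact absurd h3 hi)) id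
  · have hxe : x = d := mem1 d Iᶜ hxIc (by
      intro i hi; rcases h4 i with rfl | rfl | rfl | rfl <;>
        first
          | exact absurd hi h0 | exact absurd hi h1 | exact absurd hi h2 | exact absurd hi h3
          | exact absurd h0 hi | exact absurd h1 hi | exact absurd h2 hi | exact absurd h3 hi
          | ((simp only [f0, f1, f2, f3]) <;> tauto))
    have hxh : x ∈ convexHull ℝ ({c, a, b} : Set E2) := mem3 c a b I hxI (by
      intro i hi; rcases h4 i with rfl | rfl | rfl | rfl <;>
        first
          | exact absurd hi h0 | exact absurd hi h1 | exact absurd hi h2 | exact absurd hi h3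
          | exact absurd h0 hi | exact absurd h1 hi | exact absurd h2 hi | exact absurd h3 hi
          | ((simp only [f0, f1, f2, f3]) <;> tauto))
    rw [hxe] at hxh
    exact ⟨d, aux_tri hxh hdc (by rwa [dist_comm]) (by rwa [dist_comm]), right_mem_segment ℝ c d⟩
  · have hxe : x = c := mem1 c Iᶜ hxIc (by
      intro i hi; rcases h4 i with rfl | rfl | rfl | rfl <;>
        first
          | exact absurd hi h0 | exact absurd hi h1 | exact absurd hi h2 | exact absurd hi h3
          | exact absurd h0 hi | exact absurd h1 hi | exact absurd h2 hi | exact absurd h3 hi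
          | ((simp only [f0, f1, f2, f3]) <;> tauto))
    have hxh : x ∈ convexHull ℝ ({d, a, b} : Set E2) := mem3 d a b I hxI (by
      intro i hi; rcases h4 i with rfl | rfl | rfl | rfl <;>
        first
          | exact absurd hi h0 | exact absurd hi h1 | exact absurd hi h2 | exact absurd hi h3
          | exact absurd h0 hi | exact absurd h1 hi | exact absurd h2 hi | exact absurd h3 hi
          | ((simp only [f0, f1, f2, f3]) <;> tauto))
    rw [hxe] at hxh
    exact ⟨c, aux_tri hxh hcd (by rwa [dist_comm]) (by rwa [dist_comm]), left_mem_segment ℝ c d⟩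
  · exact ⟨x, mem2 a b I hxI (by
      intro i hi; rcases h4 i with rfl | rfl | rfl | rfl <;>
        first
          | exact absurd hi h0 | exact absurd hi h1 | exact absurd hi h2 | exact absurd hi h3
          | exact absurd h0 hi | exact absurd h1 hi | exact absurd h2 hi | exact absurd h3 hi
          | ((simp only [f0, f1, f2, f3]) <;> tauto)), mem2 c d Iᶜ hxIc (by
      intro i hi; rcases h4 i with rfl | rfl | rfl | rfl <;>
        first
          | exact absurd hi h0 | exact absurd hi h1 | exact absurd hi h2 | exact absurd hi h3
          | exact absurd h0 hi | exact absurd h1 hi | exact absurd h2 hi | exact absurd h3 hi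
          | ((simp only [f0, f1, f2, f3]) <;> tauto))⟩
  · have hxe : x = b := mem1 b Iᶜ hxIc (by
      intro i hi; rcases h4 i with rfl | rfl | rfl | rfl <;>
        first
          | exact absurd hi h0 | exact absurd hi h1 | exact absurd hi h2 | exact absurd hi h3
          | exact absurd h0 hi | exact absurd h1 hi | exact absurd h2 hi | exact absurd h3 hi
          | ((simp only [f0, f1, f2, f3]) <;> tauto))
    have hxh : x ∈ convexHull ℝ ({a, c, d} : Set E2) := mem3 a c d I hxI (by
      intro i hi; rcases h4 i with rfl | rfl | rfl | rfl <;>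
        first
          | exact absurd hi h0 | exact absurd hi h1 | exact absurd hi h2 | exact absurd hi h3
          | exact absurd h0 hi | exact absurd h1 hi | exact absurd h2 hi | exact absurd h3 hi
          | ((simp only [f0, f1, f2, f3]) <;> tauto))
    rw [hxe] at hxh
    exact ⟨b, right_mem_segment ℝ a b, aux_tri hxh hba hac had⟩
  · have hs1 : x ∈ segment ℝ a c := mem2 a c I hxI (by
      intro i hi; rcases h4 i with rfl | rfl | rfl | rfl <;>
        first
          | exact absurd hi h0 | exact absurd hi h1 | exact absurd hi h2 | exact absurd hi h3
          | exact absurd h0 hi | exact absurd h1 hi | exact absurd h2 hi | exact absurd h3 hi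
          | ((simp only [f0, f1, f2, f3]) <;> tauto))
    have hs2 : x ∈ segment ℝ b d := mem2 b d Iᶜ hxIc (by
      intro i hi; rcases h4 i with rfl | rfl | rfl | rfl <;>
        first
          | exact absurd hi h0 | exact absurd hi h1 | exact absurd hi h2 | exact absurd hi h3
          | exact absurd h0 hi | exact absurd h1 hi | exact absurd h2 hi | exact absurd h3 hi
          | ((simp only [f0, f1, f2, f3]) <;> tauto))
    obtain ⟨m1, m2⟩ := aux_cross_pair hs1 hs2 hab hcd hac hbd
    exact ⟨x, m1, m2⟩
  · have hs1 : x ∈ segment ℝ a d := mem2 a d I hxI (by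
      intro i hi; rcases h4 i with rfl | rfl | rfl | rfl <;>
        first
          | exact absurd hi h0 | exact absurd hi h1 | exact absurd hi h2 | exact absurd hi h3
          | exact absurd h0 hi | exact absurd h1 hi | exact absurd h2 hi | exact absurd h3 hi
          | ((simp only [f0, f1, f2, f3]) <;> tauto))
    have hs2 : x ∈ segment ℝ b c := mem2 b c Iᶜ hxIc (by
      intro i hi; rcases h4 i with rfl | rfl | rfl | rfl <;>
        first
          | exact absurd hi h0 | exact absurd hi h1 | exact absurd hi h2 | exact absurd hi h3
          | exact absurd h0 hi | exact absurd h1 hi | exact absurd h2 hi | exact absurd h3 hi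
          | ((simp only [f0, f1, f2, f3]) <;> tauto))
    obtain ⟨m1, m2⟩ := aux_cross_pair hs1 hs2 hab hdc had hbc
    rw [segment_symm] at m2
    exact ⟨x, m1, m2⟩
  · have hxe : x = a := mem1 a I hxI (by
      intro i hi; rcases h4 i with rfl | rfl | rfl | rfl <;>
        first
          | exact absurd hi h0 | exact absurd hi h1 | exact absurd hi h2 | exact absurd hi h3
          | exact absurd h0 hi | exact absurd h1 hi | exact absurd h2 hi | exact absurd h3 hi
          | ((simp only [f0, f1, f2, f3]) <;> tauto))
    have hxh : x ∈ convexHull ℝ ({b, c, d} : Set E2) := mem3 b c d Iᶜ hxIc (by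
      intro i hi; rcases h4 i with rfl | rfl | rfl | rfl <;>
        first
          | exact absurd hi h0 | exact absurd hi h1 | exact absurd hi h2 | exact absurd hi h3
          | exact absurd h0 hi | exact absurd h1 hi | exact absurd h2 hi | exact absurd h3 hi
          | ((simp only [f0, f1, f2, f3]) <;> tauto))
    rw [hxe] at hxh
    exact ⟨a, left_mem_segment ℝ a b, aux_tri hxh hab hbc hbd⟩
  · have hxe : x = a := mem1 a Iᶜ hxIc (by
      intro i hi; rcases h4 i with rfl | rfl | rfl | rfl <;>
        first
          | exact absurd hi h0 | exact absurd hi h1 | exact absurd hi h2 | exact absurd hi h3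
          | exact absurd h0 hi | exact absurd h1 hi | exact absurd h2 hi | exact absurd h3 hi
          | ((simp only [f0, f1, f2, f3]) <;> tauto))
    have hxh : x ∈ convexHull ℝ ({b, c, d} : Set E2) := mem3 b c d I hxI (by
      intro i hi; rcases h4 i with rfl | rfl | rfl | rfl <;>
        first
          | exact absurd hi h0 | exact absurd hi h1 | exact absurd hi h2 | exact absurd hi h3
          | exact absurd h0 hi | exact absurd h1 hi | exact absurd h2 hi | exact absurd h3 hi
          | ((simp only [f0, f1, f2, f3]) <;> tauto))
    rw [hxe] at hxh
    exact ⟨a, left_mem_segment ℝ a b, aux_tri hxh hab hbc hbd⟩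
  · have hs1 : x ∈ segment ℝ a d := mem2 a d Iᶜ hxIc (by
      intro i hi; rcases h4 i with rfl | rfl | rfl | rfl <;>
        first
          | exact absurd hi h0 | exact absurd hi h1 | exact absurd hi h2 | exact absurd hi h3
          | exact absurd h0 hi | exact absurd h1 hi | exact absurd h2 hi | exact absurd h3 hi
          | ((simp only [f0, f1, f2, f3]) <;> tauto))
    have hs2 : x ∈ segment ℝ b c := mem2 b c I hxI (by
      intro i hi; rcases h4 i with rfl | rfl | rfl | rfl <;>
        first
          | exact absurd hi h0 | exact absurd hi h1 | exact absurd hi h2 | exact absurd hi h3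
          | exact absurd h0 hi | exact absurd h1 hi | exact absurd h2 hi | exact absurd h3 hi
          | ((simp only [f0, f1, f2, f3]) <;> tauto))
    obtain ⟨m1, m2⟩ := aux_cross_pair hs1 hs2 hab hdc had hbc
    rw [segment_symm] at m2
    exact ⟨x, m1, m2⟩
  · have hs1 : x ∈ segment ℝ a c := mem2 a c Iᶜ hxIc (by
      intro i hi; rcases h4 i with rfl | rfl | rfl | rfl <;>
        first
          | exact absurd hi h0 | exact absurd hi h1 | exact absurd hi h2 | exact absurd hi h3
          | exact absurd h0 hi | exact absurd h1 hi | exact absurd h2 hi | exact absurd h3 hi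
          | ((simp only [f0, f1, f2, f3]) <;> tauto))
    have hs2 : x ∈ segment ℝ b d := mem2 b d I hxI (by
      intro i hi; rcases h4 i with rfl | rfl | rfl | rfl <;>
        first
          | exact absurd hi h0 | exact absurd hi h1 | exact absurd hi h2 | exact absurd hi h3
          | exact absurd h0 hi | exact absurd h1 hi | exact absurd h2 hi | exact absurd h3 hi
          | ((simp only [f0, f1, f2, f3]) <;> tauto))
    obtain ⟨m1, m2⟩ := aux_cross_pair hs1 hs2 hab hcd hac hbd
    exact ⟨x, m1, m2⟩
  · have hxe : x = b := mem1 b I hxI (by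
      intro i hi; rcases h4 i with rfl | rfl | rfl | rfl <;>
        first
          | exact absurd hi h0 | exact absurd hi h1 | exact absurd hi h2 | exact absurd hi h3
          | exact absurd h0 hi | exact absurd h1 hi | exact absurd h2 hi | exact absurd h3 hi
          | ((simp only [f0, f1, f2, f3]) <;> tauto))
    have hxh : x ∈ convexHull ℝ ({a, c, d} : Set E2) := mem3 a c d Iᶜ hxIc (by
      intro i hi; rcases h4 i with rfl | rfl | rfl | rfl <;>
        first
          | exact absurd hi h0 | exact absurd hi h1 | exact absurd hi h2 | exact absurd hi h3
          | exact absurd h0 hi | exact absurd h1 hi | exact absurd h2 hi | exact absurd h3 hi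
          | ((simp only [f0, f1, f2, f3]) <;> tauto))
    rw [hxe] at hxh
    exact ⟨b, right_mem_segment ℝ a b, aux_tri hxh hba hac had⟩
  · exact ⟨x, mem2 a b Iᶜ hxIc (by
      intro i hi; rcases h4 i with rfl | rfl | rfl | rfl <;>
        first
          | exact absurd hi h0 | exact absurd hi h1 | exact absurd hi h2 | exact absurd hi h3
          | exact absurd h0 hi | exact absurd h1 hi | exact absurd h2 hi | exact absurd h3 hi
          | ((simp only [f0, f1, f2, f3]) <;> tauto)), mem2 c d I hxI (by
      intro i hi; rcases h4 i with rfl | rfl | rfl | rfl <;>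
        first
          | exact absurd hi h0 | exact absurd hi h1 | exact absurd hi h2 | exact absurd hi h3
          | exact absurd h0 hi | exact absurd h1 hi | exact absurd h2 hi | exact absurd h3 hi
          | ((simp only [f0, f1, f2, f3]) <;> tauto))⟩
  · have hxe : x = c := mem1 c I hxI (by
      intro i hi; rcases h4 i with rfl | rfl | rfl | rfl <;>
        first
          | exact absurd hi h0 | exact absurd hi h1 | exact absurd hi h2 | exact absurd hi h3
          | exact absurd h0 hi | exact absurd h1 hi | exact absurd h2 hi | exact absurd h3 hi
          | ((simp only [f0, f1, f2, f3]) <;> tauto))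
    have hxh : x ∈ convexHull ℝ ({d, a, b} : Set E2) := mem3 d a b Iᶜ hxIc (by
      intro i hi; rcases h4 i with rfl | rfl | rfl | rfl <;>
        first
          | exact absurd hi h0 | exact absurd hi h1 | exact absurd hi h2 | exact absurd hi h3
          | exact absurd h0 hi | exact absurd h1 hi | exact absurd h2 hi | exact absurd h3 hi
          | ((simp only [f0, f1, f2, f3]) <;> tauto))
    rw [hxe] at hxh
    exact ⟨c, aux_tri hxh hcd (by rwa [dist_comm]) (by rwa [dist_comm]), left_mem_segment ℝ c d⟩
  · have hxe : x = d := mem1 d I hxI (by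
      intro i hi; rcases h4 i with rfl | rfl | rfl | rfl <;>
        first
          | exact absurd hi h0 | exact absurd hi h1 | exact absurd hi h2 | exact absurd hi h3
          | exact absurd h0 hi | exact absurd h1 hi | exact absurd h2 hi | exact absurd h3 hi
          | ((simp only [f0, f1, f2, f3]) <;> tauto))
    have hxh : x ∈ convexHull ℝ ({c, a, b} : Set E2) := mem3 c a b Iᶜ hxIc (by
      intro i hi; rcases h4 i with rfl | rfl | rfl | rfl <;>
        first
          | exact absurd hi h0 | exact absurd hi h1 | exact absurd hi h2 | exact absurd hi h3
          | exact absurd h0 hi | exact absurd h1 hi | exact absurd h2 hi | exact absurd h3 hi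
          | ((simp only [f0, f1, f2, f3]) <;> tauto))
    rw [hxe] at hxh
    exact ⟨d, aux_tri hxh hdc (by rwa [dist_comm]) (by rwa [dist_comm]), right_mem_segment ℝ c d⟩
  · exact absurd (mem0 I hxI (by
      intro i hi; rcases h4 i with rfl | rfl | rfl | rfl <;>
        first
          | exact absurd hi h0 | exact absurd hi h1 | exact absurd hi h2 | exact absurd hi h3
          | exact absurd h0 hi | exact absurd h1 hi | exact absurd h2 hi | exact absurd h3 hi)) id

private lemma aux_offline {a b p q : E2} {D : ℝ} (hD : 0 < D)
    (hab : dist a b = D) (hpq : dist p q = D)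
    (hpa : dist p a ≤ D) (hpb : dist p b ≤ D)
    (hqa : dist q a ≤ D) (hqb : dist q b ≤ D)
    (hpa' : p ≠ a) (hpb' : p ≠ b)
    (hf : (p 0 - a 0) * (a 1 - b 1) + (p 1 - a 1) * (b 0 - a 0) = 0) : False := by
  have hab' : a ≠ b := by
    intro h; rw [h, dist_self] at hab; linarith
  have hfin2 : ∀ i : Fin 2, i = 0 ∨ i = 1 := by decide
  obtain ⟨t, ht⟩ : ∃ t : ℝ, p - a = t • (b - a) := by
    by_cases h0 : b 0 - a 0 = 0
    · have h1 : b 1 - a 1 ≠ 0 := by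
        intro h1
        apply hab'
        apply PiLp.ext
        intro i
        rcases hfin2 i with rfl | rfl
        · linarith
        · linarith
      refine ⟨(p 1 - a 1) / (b 1 - a 1), ?_⟩
      apply PiLp.ext
      intro i
      rcases hfin2 i with rfl | rfl <;>
        simp only [PiLp.sub_apply, PiLp.smul_apply, smul_eq_mul]
      · have hp0 : p 0 - a 0 = 0 := by
          rcases mul_eq_zero.mp (by linear_combination hf - (p 1 - a 1) * h0 :
              (p 0 - a 0) * (a 1 - b 1) = 0) with h | h
          · exact h
          · exact absurd (by linarith : b 1 - a 1 = 0) h1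
        rw [hp0, h0, mul_zero]
      · field_simp
    · refine ⟨(p 0 - a 0) / (b 0 - a 0), ?_⟩
      apply PiLp.ext
      intro i
      rcases hfin2 i with rfl | rfl <;>
        simp only [PiLp.sub_apply, PiLp.smul_apply, smul_eq_mul]
      · field_simp
      · field_simp
        linear_combination hf
  have hba : ‖b - a‖ = D := by rw [← dist_eq_norm, dist_comm]; exact hab
  have hDpa : dist p a = |t| * D := by
    rw [dist_eq_norm, ht, norm_smul, Real.norm_eq_abs, hba]
  have h2 : p - b = (t - 1) • (b - a) := by
    rw [sub_smul, one_smul, ← ht]; abel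
  have hDpb : dist p b = |t - 1| * D := by
    rw [dist_eq_norm, h2, norm_smul, Real.norm_eq_abs, hba]
  have ht1 : |t| ≤ 1 := by
    by_contra h; push_neg at h
    have : D < dist p a := by rw [hDpa]; nlinarith
    linarith
  have ht2 : |t - 1| ≤ 1 := by
    by_contra h; push_neg at h
    have : D < dist p b := by rw [hDpb]; nlinarith
    linarith
  rw [abs_le] at ht1 ht2
  have ht0 : 0 ≤ t := by linarith [ht2.1]
  have ht1' : t ≤ 1 := ht1.2
  have htne0 : t ≠ 0 := by
    intro h
    apply hpa'
    have : p - a = 0 := by rw [ht, h, zero_smul]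
    exact sub_eq_zero.mp this
  have htne1 : t ≠ 1 := by
    intro h
    apply hpb'
    have : p - b = 0 := by rw [h2, h, sub_self, zero_smul]
    exact sub_eq_zero.mp this
  have hp : p = a + t • (b - a) := by
    rw [← ht]; abel
  have key : q - p = (1 - t) • (q - a) + t • (q - b) := by
    rw [hp]
    module
  have hlt : ‖(1 - t) • (q - a) + t • (q - b)‖ < D :=
    norm_combo_lt_of_ne (by rw [← dist_eq_norm]; exact hqa)
      (by rw [← dist_eq_norm]; exact hqb)
      (by
        intro h
        exact hab' (by
          have h2 := congrArg (fun z => q - z) h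
          simpa [sub_sub_cancel] using h2))
      (by have h := lt_of_le_of_ne ht1' htne1; linarith)
      (lt_of_le_of_ne ht0 (Ne.symm htne0))
      (by ring)
  rw [← key, ← dist_eq_norm, dist_comm, hpq] at hlt
  linarith


open Fin.NatCast in
set_option maxHeartbeats 4000000 in
private lemma aux_main (X : Set (EuclideanSpace ℝ (Fin 2))) (D : ℝ)
    (hD : IsGreatest {d : ℝ | ∃ p ∈ X, ∃ q ∈ X, p ≠ q ∧ dist p q = d} D)
    (n : ℕ) (hn4 : 4 ≤ n) (hpar : n % 2 = 0) [NeZero n]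
    (P : Fin n → EuclideanSpace ℝ (Fin 2))
    (hPX : ∀ i, P i ∈ X) (hinj : Function.Injective P)
    (hEdge : ∀ i, dist (P i) (P (i + 1)) = D) : False := by
  haveI : NeZero n := ⟨by omega⟩
  have hne : ∀ j1 j2 : ℕ, j1 < n → j2 < n → j1 ≠ j2 → P ↑j1 ≠ P ↑j2 := by
    intro j1 j2 h1 h2 hj h
    apply hj
    have h' := hinj h
    calc j1 = ((↑j1 : Fin n) : ℕ) := (Fin.val_cast_of_lt h1).symm
      _ = ((↑j2 : Fin n) : ℕ) := by rw [h']
      _ = j2 := Fin.val_cast_of_lt h2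
  have hE' : ∀ j : ℕ, dist (P ↑j) (P ↑(j + 1)) = D := by
    intro j
    have hc : ((↑(j + 1) : Fin n)) = ↑j + 1 := by push_cast; ring
    rw [hc]
    exact hEdge ↑j
  have hab : dist (P ↑(0 : ℕ)) (P ↑(1 : ℕ)) = D := by
    have h := hE' 0
    norm_num at h ⊢
    exact h
  have h12 : dist (P ↑(1 : ℕ)) (P ↑(2 : ℕ)) = D := by
    have h := hE' 1
    norm_num at h ⊢
    exact h
  have hD0 : 0 < D := by
    rw [← hab]
    exact dist_pos.mpr (hne 0 1 (by omega) (by omega) (by omega))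
  have hle : ∀ i j : Fin n, dist (P i) (P j) ≤ D := by
    intro i j
    rcases eq_or_ne (P i) (P j) with h | h
    · rw [h, dist_self]; linarith
    · exact hD.2 ⟨P i, hPX i, P j, hPX j, h, rfl⟩
  set f : E2 → ℝ := fun x =>
      (x 0 - (P ↑(0 : ℕ)) 0) * ((P ↑(0 : ℕ)) 1 - (P ↑(1 : ℕ)) 1) +
      (x 1 - (P ↑(0 : ℕ)) 1) * ((P ↑(1 : ℕ)) 0 - (P ↑(0 : ℕ)) 0) with hfdef
  have hfa : f (P ↑(0 : ℕ)) = 0 := by simp [hfdef]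
  have hfb : f (P ↑(1 : ℕ)) = 0 := by simp [hfdef]; ring
  have hfseg : ∀ x y z : E2, x ∈ segment ℝ y z →
      ∃ s t : ℝ, 0 ≤ s ∧ 0 ≤ t ∧ s + t = 1 ∧ x = s • y + t • z ∧
        f x = s * f y + t * f z := by
    rintro x y z ⟨s, t, hs, ht, hst, rfl⟩
    refine ⟨s, t, hs, ht, hst, rfl, ?_⟩
    simp only [hfdef, PiLp.add_apply, PiLp.smul_apply, smul_eq_mul]
    linear_combination ((P ↑(0 : ℕ)) 0 * ((P ↑(0 : ℕ)) 1 - (P ↑(1 : ℕ)) 1) +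
      (P ↑(0 : ℕ)) 1 * ((P ↑(1 : ℕ)) 0 - (P ↑(0 : ℕ)) 0)) * hst
  have hne0 : ∀ j : ℕ, 2 ≤ j → j ≤ n - 1 → f (P ↑j) ≠ 0 := by
    intro j h2 h3 hf0
    refine aux_offline (a := P ↑(0 : ℕ)) (b := P ↑(1 : ℕ)) (p := P ↑j) (q := P ↑(j + 1))
      hD0 hab (hE' j) (hle _ _) (hle _ _) (hle _ _) (hle _ _)
      (hne j 0 (by omega) (by omega) (by omega))
      (hne j 1 (by omega) (by omega) (by omega)) ?_
    simp only [hfdef] at hf0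
    exact hf0
  -- adjacent edges (P1,P2) and (P(n-1),P0) cross: same-sign endpoints
  have hadj : 0 < f (P ↑(2 : ℕ)) * f (P ↑(n - 1)) := by
    have hcd : dist (P ↑(n - 1)) (P ↑(0 : ℕ)) = D := by
      have h := hE' (n - 1)
      rw [show n - 1 + 1 = n from by omega] at h
      rwa [show ((n : ℕ) : Fin n) = ((0 : ℕ) : Fin n) from by
        rw [Fin.natCast_self, Nat.cast_zero]] at h
    obtain ⟨x, hx1, hx2⟩ :=
      aux_cross h12 hcd (hle _ _) (hle _ _) (hle _ _) (hle _ _)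
    obtain ⟨s, t, hs, ht, hst, hrep1, hfx1⟩ := hfseg _ _ _ hx1
    obtain ⟨s', t', hs', ht', hst', hrep2, hfx2⟩ := hfseg _ _ _ hx2
    rw [hfb, mul_zero, zero_add] at hfx1
    rw [hfa, mul_zero, add_zero] at hfx2
    have hA : f (P ↑(2 : ℕ)) ≠ 0 := hne0 2 le_rfl (by omega)
    have hC : f (P ↑(n - 1)) ≠ 0 := hne0 (n - 1) (by omega) le_rfl
    by_cases hx0 : f x = 0
    · have ht0 : t = 0 := by
        rcases mul_eq_zero.mp (hx0 ▸ hfx1).symm with h | h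
        · exact h
        · exact absurd h hA
      have hs1 : s = 1 := by linarith
      have hxb : x = P ↑(1 : ℕ) := by rw [hrep1, ht0, hs1]; simp
      have hs'0 : s' = 0 := by
        rcases mul_eq_zero.mp (hx0 ▸ hfx2).symm with h | h
        · exact h
        · exact absurd h hC
      have ht'1 : t' = 1 := by linarith
      have hxa : x = P ↑(0 : ℕ) := by rw [hrep2, hs'0, ht'1]; simp
      exact absurd (show P ↑(1 : ℕ) = P ↑(0 : ℕ) by rw [← hxb, hxa])
        (hne 1 0 (by omega) (by omega) (by omega))
    · have hkey : t * f (P ↑(2 : ℕ)) = s' * f (P ↑(n - 1)) := by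
        rw [← hfx1, ← hfx2]
      have htpos : 0 < t :=
        lt_of_le_of_ne ht (fun h => hx0 (by rw [hfx1, ← h, zero_mul]))
      have hs'pos : 0 < s' :=
        lt_of_le_of_ne hs' (fun h => hx0 (by rw [hfx2, ← h, zero_mul]))
      have hfx : t * f (P ↑(2 : ℕ)) ≠ 0 := by rw [← hfx1]; exact hx0
      have h1 : 0 < (t * f (P ↑(2 : ℕ))) * (s' * f (P ↑(n - 1))) := by
        rw [← hkey]
        exact mul_self_pos.mpr hfx
      nlinarith [mul_pos htpos hs'pos]
  -- middle edges cross the segment P0P1: alternating signs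
  have hmid : ∀ j : ℕ, 2 ≤ j → j + 1 ≤ n - 1 →
      f (P ↑j) * f (P ↑(j + 1)) < 0 := by
    intro j h2 h3
    obtain ⟨x, hx1, hx2⟩ :=
      aux_cross hab (hE' j) (hle _ _) (hle _ _) (hle _ _) (hle _ _)
    obtain ⟨s, t, hs, ht, hst, hrep1, hfx1⟩ := hfseg _ _ _ hx1
    obtain ⟨s', t', hs', ht', hst', hrep2, hfx2⟩ := hfseg _ _ _ hx2
    rw [hfa, hfb, mul_zero, mul_zero, add_zero] at hfx1
    have hzero : s' * f (P ↑j) + t' * f (P ↑(j + 1)) = 0 := by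
      rw [← hfx2, hfx1]
    have hA := hne0 j h2 (by omega)
    have hB := hne0 (j + 1) (by omega) h3
    have hs'0 : s' ≠ 0 := by
      intro h
      apply hB
      have ht'1 : t' = 1 := by linarith
      rw [h, ht'1] at hzero
      simpa using hzero
    have ht'0 : t' ≠ 0 := by
      intro h
      apply hA
      have hs'1 : s' = 1 := by linarith
      rw [h, hs'1] at hzero
      simpa using hzero
    have hs'p : 0 < s' := lt_of_le_of_ne hs' (Ne.symm hs'0)
    have ht'p : 0 < t' := lt_of_le_of_ne ht' (Ne.symm ht'0)
    by_contra hc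
    push_neg at hc
    have h1 : s' * (f (P ↑j) * f (P ↑j)) + t' * (f (P ↑j) * f (P ↑(j + 1))) = 0 := by
      linear_combination (f (P ↑j)) * hzero
    have hAA : 0 < f (P ↑j) * f (P ↑j) := mul_self_pos.mpr hA
    nlinarith [mul_pos hs'p hAA, mul_nonneg (le_of_lt ht'p) hc]
  -- parity chain
  have hchain : ∀ m : ℕ, 2 + m ≤ n - 1 →
      (Even m → 0 < f (P ↑(2 : ℕ)) * f (P ↑(2 + m))) ∧
      (¬ Even m → f (P ↑(2 : ℕ)) * f (P ↑(2 + m)) < 0) := by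
    intro m
    induction m with
    | zero =>
      intro h
      refine ⟨fun _ => ?_, fun h' => absurd Even.zero h'⟩
      exact mul_self_pos.mpr (hne0 2 le_rfl (by omega))
    | succ m ih =>
      intro h
      have hm := ih (by omega)
      have hstep := hmid (2 + m) (by omega) (by omega)
      rw [show 2 + m + 1 = 2 + (m + 1) from by omega] at hstep
      constructor
      · intro he
        have hmo : ¬ Even m := by rwa [Nat.even_add_one] at he
        have h1 := hm.2 hmo
        nlinarith [sq_nonneg (f (P ↑(2 + m))),
          mul_pos (neg_pos.mpr h1) (neg_pos.mpr hstep)]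
      · intro ho
        have hme : Even m := by rwa [Nat.even_add_one, not_not] at ho
        have h1 := hm.1 hme
        nlinarith [sq_nonneg (f (P ↑(2 + m))), mul_pos h1 (neg_pos.mpr hstep)]
  have hfinal := (hchain (n - 3) (by omega)).2 (by
    intro he
    rw [Nat.even_iff] at he
    omega)
  rw [show 2 + (n - 3) = n - 1 from by omega] at hfinal
  linarith [hadj]

/-- The diameter graph of a finite planar point set contains no even cycle:
for every `k ≥ 2` (even length `2k+4`, `k ≥ 0` below) there is no cycle of
`2k` pairwise distinct points of `X` with consecutive points (cyclically)
at distance `D(X)`, where `D(X)` is the greatest element of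
`A(X) = {dist p q : p ≠ q ∈ X}`. -/
theorem stmt_7 (X : Set (EuclideanSpace ℝ (Fin 2))) (hfin : X.Finite)
    (hcard : 2 ≤ X.ncard) (D : ℝ)
    (hD : IsGreatest {d : ℝ | ∃ p ∈ X, ∃ q ∈ X, p ≠ q ∧ dist p q = d} D)
    (k : ℕ) :
    ¬ ∃ P : Fin (2 * k + 4) → EuclideanSpace ℝ (Fin 2),
      (∀ i, P i ∈ X) ∧ Function.Injective P ∧
      (∀ i, dist (P i) (P (i + 1)) = D) := by
  rintro ⟨P, h1, h2, h3⟩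
  haveI : NeZero (2 * k + 4) := ⟨by omega⟩
  exact aux_main X D hD (2 * k + 4) (by omega) (by omega) P h1 h2 h3
end

section
/- Let P₁, P₂, P₃ ∈ ℝ³ with dist(P₁,P₂) = dist(P₂,P₃) = dist(P₃,P₁) = c for some real c > 0, let Π be the affine plane determined by P₁, P₂, P₃, and let R⁺ be one of the two closed half-spaces bounded by Π (containing Π) and R⁻ the complementary open half-space. Define S⁺ = {Q ∈ R⁺ : dist(P_i, Q) ≤ c for i = 1,2,3} and S⁻ = {Q ∈ R⁻ : dist(P_i, Q) ≤ c for i = 1,2,3}. Then: (a) for all Q₁, Q₂ ∈ S⁺ one has dist(Q₁,Q₂) ≤ c, with equality only if Q₁ ∈ {P₁,P₂,P₃} or Q₂ ∈ {P₁,P₂,P₃}; and (b) for all Q₁, Q₂ ∈ S⁻ one has dist(Q₁,Q₂) < c. -/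
private lemma Knonneg (l m : ℝ) : 0 ≤ l^2 + l*m + m^2 := by
  nlinarith [sq_nonneg (l+m), sq_nonneg l, sq_nonneg m]

private lemma Kzero {l m : ℝ} (h : l^2 + l*m + m^2 = 0) : l = 0 ∧ m = 0 := by
  have hl : l^2 = 0 := le_antisymm (by nlinarith [sq_nonneg (l+m), sq_nonneg m]) (sq_nonneg l)
  have hm : m^2 = 0 := le_antisymm (by nlinarith [sq_nonneg (l+m), sq_nonneg l]) (sq_nonneg m)
  exact ⟨pow_eq_zero_iff two_ne_zero |>.mp hl, pow_eq_zero_iff two_ne_zero |>.mp hm⟩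

private lemma sector (s x0 ip1 ip2 lam mu : ℝ)
    (hx0 : 0 ≤ x0) (hs0 : 0 ≤ s) (hs1 : s ≤ 1)
    (hl : 0 ≤ lam) (hm : 0 ≤ mu)
    (hr1 : lam^2 + lam*mu + mu^2 ≤ 1)
    (hx : x0 ≤ s^2)
    (h1 : x0 + 1 - s^2 ≤ 2*ip1) (h2 : x0 + 1 - s^2 ≤ 2*ip2) :
    x0 - 2*(lam*ip1 + mu*ip2) + (lam^2 + lam*mu + mu^2) ≤ s^2 ∧
    (x0 - 2*(lam*ip1 + mu*ip2) + (lam^2 + lam*mu + mu^2) = s^2 →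
      (lam = 0 ∧ mu = 0) ∨ (lam = 1 ∧ mu = 0) ∨ (lam = 0 ∧ mu = 1) ∨ (x0 = 0 ∧ s = 1)) := by
  have hs2 : s^2 ≤ 1 := by nlinarith
  set r := Real.sqrt (lam^2 + lam*mu + mu^2) with hrdef
  have hr0 : 0 ≤ r := Real.sqrt_nonneg _
  have hrsq : r^2 = lam^2 + lam*mu + mu^2 := Real.sq_sqrt (Knonneg lam mu)
  have hrle : r ≤ 1 := by nlinarith
  have hlm : r ≤ lam + mu := by nlinarith [mul_nonneg hl hm]
  have hD : 0 ≤ x0 + 1 - s^2 := by linarith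
  have t3 : 0 ≤ lam*(2*ip1 - (x0+1-s^2)) := mul_nonneg hl (by linarith)
  have t4 : 0 ≤ mu*(2*ip2 - (x0+1-s^2)) := mul_nonneg hm (by linarith)
  have t5 : 0 ≤ (lam+mu-r)*(x0+1-s^2) := mul_nonneg (by linarith) hD
  have t1 : 0 ≤ (1-r)*(s^2-x0) := mul_nonneg (by linarith) (by linarith)
  have t2 : 0 ≤ r*(1-r) := mul_nonneg hr0 (by linarith)
  have key : x0 - 2*(lam*ip1 + mu*ip2) + (lam^2 + lam*mu + mu^2)
      = s^2 - ((1-r)*(s^2-x0) + r*(1-r) + (lam*(2*ip1 - (x0+1-s^2))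
          + mu*(2*ip2 - (x0+1-s^2)) + (lam+mu-r)*(x0+1-s^2))) := by
    rw [← hrsq]; ring
  constructor
  · rw [key]; linarith
  · intro heq
    rw [key] at heq
    have e2 : r*(1-r) = 0 := by linarith
    have e3 : lam*(2*ip1 - (x0+1-s^2)) = 0 := by linarith
    have e4 : mu*(2*ip2 - (x0+1-s^2)) = 0 := by linarith
    have e5 : (lam+mu-r)*(x0+1-s^2) = 0 := by linarith
    rcases mul_eq_zero.mp e2 with hr|h1r
    · left
      exact Kzero (by rw [← hrsq, hr]; ring)
    · have hr1' : r = 1 := by linarith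
      rcases mul_eq_zero.mp e5 with h|hD0
      · have hsum : lam + mu = 1 := by rw [hr1'] at h; linarith
        have hK : lam^2 + lam*mu + mu^2 = 1 := by rw [← hrsq, hr1']; norm_num
        have hprod : lam*mu = 0 := by linear_combination (lam+mu+1)*hsum - hK
        rcases mul_eq_zero.mp hprod with h'|h'
        · right; right; left; exact ⟨h', by linarith⟩
        · right; left; exact ⟨by linarith, h'⟩
      · right; right; right
        have hx0' : x0 = 0 := by nlinarith
        have hsq1 : s^2 = 1 := by linarith
        have : (s-1)*(s+1) = 0 := by linear_combination hsq1
        rcases mul_eq_zero.mp this with h'|h'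
        · exact ⟨hx0', by linarith⟩
        · exact ⟨hx0', by linarith⟩

set_option maxHeartbeats 2000000 in
private lemma twoD (s l1 m1 l2 m2 : ℝ) (hs0 : 0 ≤ s) (hs1 : s ≤ 1)
    (h1 : l1^2 + l1*m1 + m1^2 ≤ s^2)
    (h2 : (l1-1)^2 + (l1-1)*m1 + m1^2 ≤ s^2)
    (h3 : l1^2 + l1*(m1-1) + (m1-1)^2 ≤ s^2)
    (h4 : l2^2 + l2*m2 + m2^2 ≤ 1)
    (h5 : (l2-1)^2 + (l2-1)*m2 + m2^2 ≤ 1)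
    (h6 : l2^2 + l2*(m2-1) + (m2-1)^2 ≤ 1) :
    (l1-l2)^2 + (l1-l2)*(m1-m2) + (m1-m2)^2 ≤ s^2 ∧
    ((l1-l2)^2 + (l1-l2)*(m1-m2) + (m1-m2)^2 = s^2 →
      ((l2 = 0 ∧ m2 = 0) ∨ (l2 = 1 ∧ m2 = 0) ∨ (l2 = 0 ∧ m2 = 1)) ∨
      (((l1 = 0 ∧ m1 = 0) ∨ (l1 = 1 ∧ m1 = 0) ∨ (l1 = 0 ∧ m1 = 1)) ∧ s = 1)) := by
  rcases le_or_gt 0 m2 with hm2|hm2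
  · rcases le_or_gt 0 l2 with hl2|hl2
    · -- sector at P₁
      obtain ⟨hle, heq⟩ := sector s (l1^2 + l1*m1 + m1^2) (l1 + m1/2) (l1/2 + m1) l2 m2
        (Knonneg l1 m1) hs0 hs1 hl2 hm2 h4 h1 (by nlinarith [h2]) (by nlinarith [h3])
      have hid : (l1-l2)^2 + (l1-l2)*(m1-m2) + (m1-m2)^2
          = (l1^2 + l1*m1 + m1^2) - 2*(l2*(l1 + m1/2) + m2*(l1/2 + m1))
            + (l2^2 + l2*m2 + m2^2) := by ring
      rw [hid]
      refine ⟨hle, fun he => ?_⟩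
      rcases heq he with ⟨ha, hb⟩|⟨ha, hb⟩|⟨ha, hb⟩|⟨ha, hb⟩
      · exact Or.inl (Or.inl ⟨ha, hb⟩)
      · exact Or.inl (Or.inr (Or.inl ⟨ha, hb⟩))
      · exact Or.inl (Or.inr (Or.inr ⟨ha, hb⟩))
      · exact Or.inr ⟨Or.inl (Kzero ha), hb⟩
    · -- l2 < 0 : sector at P₂
      have hsum : l2 + m2 ≤ 1 := by nlinarith [h4, sq_nonneg l2, mul_nonneg hm2 hm2]
      obtain ⟨hle, heq⟩ := sector s ((l1-1)^2 + (l1-1)*m1 + m1^2) (1 - l1 - m1/2)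
        ((1-l1)/2 + m1/2) (1 - l2 - m2) m2
        (Knonneg (l1-1) m1) hs0 hs1 (by linarith) hm2 (by nlinarith [h5]) h2
        (by nlinarith [h1]) (by nlinarith [h3])
      have hid : (l1-l2)^2 + (l1-l2)*(m1-m2) + (m1-m2)^2
          = ((l1-1)^2 + (l1-1)*m1 + m1^2) - 2*((1-l2-m2)*(1 - l1 - m1/2) + m2*((1-l1)/2 + m1/2))
            + ((1-l2-m2)^2 + (1-l2-m2)*m2 + m2^2) := by ring
      rw [hid]
      refine ⟨hle, fun he => ?_⟩
      rcases heq he with ⟨ha, hb⟩|⟨ha, hb⟩|⟨ha, hb⟩|⟨ha, hb⟩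
      · exact Or.inl (Or.inr (Or.inl ⟨by linarith, hb⟩))
      · exact Or.inl (Or.inl ⟨by linarith, hb⟩)
      · exact Or.inl (Or.inr (Or.inr ⟨by linarith, hb⟩))
      · obtain ⟨ha1, ha2⟩ := Kzero ha
        exact Or.inr ⟨Or.inr (Or.inl ⟨by linarith, ha2⟩), hb⟩
  · -- m2 < 0 : sector at P₃
    have hl2 : 0 ≤ l2 := by
      by_contra hcon
      push_neg at hcon
      nlinarith [h5, mul_pos (show (0:ℝ) < 1 - l2 by linarith) (show (0:ℝ) < -m2 by linarith),
        sq_nonneg m2, sq_nonneg l2]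
    have hsum : l2 + m2 ≤ 1 := by
      by_contra hcon
      push_neg at hcon
      nlinarith [h6, mul_pos (show (0:ℝ) < l2 by linarith) (show (0:ℝ) < l2 + m2 - 1 by linarith),
        sq_nonneg m2]
    obtain ⟨hle, heq⟩ := sector s (l1^2 + l1*(m1-1) + (m1-1)^2) (1 - m1 - l1/2)
      (l1/2 + (1-m1)/2) (1 - l2 - m2) l2
      (Knonneg l1 (m1-1)) hs0 hs1 (by linarith) hl2 (by nlinarith [h6]) h3
      (by nlinarith [h1]) (by nlinarith [h2])
    have hid : (l1-l2)^2 + (l1-l2)*(m1-m2) + (m1-m2)^2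
        = (l1^2 + l1*(m1-1) + (m1-1)^2) - 2*((1-l2-m2)*(1 - m1 - l1/2) + l2*(l1/2 + (1-m1)/2))
          + ((1-l2-m2)^2 + (1-l2-m2)*l2 + l2^2) := by ring
    rw [hid]
    refine ⟨hle, fun he => ?_⟩
    rcases heq he with ⟨ha, hb⟩|⟨ha, hb⟩|⟨ha, hb⟩|⟨ha, hb⟩
    · exact Or.inl (Or.inr (Or.inr ⟨hb, by linarith⟩))
    · exact Or.inl (Or.inl ⟨hb, by linarith⟩)
    · exact Or.inl (Or.inr (Or.inl ⟨hb, by linarith⟩))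
    · obtain ⟨ha1, ha2⟩ := Kzero ha
      exact Or.inr ⟨Or.inr (Or.inr ⟨ha1, by linarith⟩), hb⟩

set_option maxHeartbeats 1000000 in
private lemma mainA (l1 m1 g1 l2 m2 g2 : ℝ) (hg2 : 0 ≤ g2) (hg : g2 ≤ g1)
    (hA1 : l1^2 + l1*m1 + m1^2 + g1^2 ≤ 1)
    (hA2 : (l1-1)^2 + (l1-1)*m1 + m1^2 + g1^2 ≤ 1)
    (hA3 : l1^2 + l1*(m1-1) + (m1-1)^2 + g1^2 ≤ 1)
    (hB1 : l2^2 + l2*m2 + m2^2 + g2^2 ≤ 1)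
    (hB2 : (l2-1)^2 + (l2-1)*m2 + m2^2 + g2^2 ≤ 1)
    (hB3 : l2^2 + l2*(m2-1) + (m2-1)^2 + g2^2 ≤ 1) :
    (l1-l2)^2 + (l1-l2)*(m1-m2) + (m1-m2)^2 + (g1-g2)^2 ≤ 1 ∧
    ((l1-l2)^2 + (l1-l2)*(m1-m2) + (m1-m2)^2 + (g1-g2)^2 = 1 →
      ((l1 = 0 ∧ m1 = 0 ∧ g1 = 0) ∨ (l1 = 1 ∧ m1 = 0 ∧ g1 = 0) ∨ (l1 = 0 ∧ m1 = 1 ∧ g1 = 0)) ∨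
      ((l2 = 0 ∧ m2 = 0 ∧ g2 = 0) ∨ (l2 = 1 ∧ m2 = 0 ∧ g2 = 0) ∨ (l2 = 0 ∧ m2 = 1 ∧ g2 = 0))) := by
  have hg1 : 0 ≤ g1 := le_trans hg2 hg
  have hg1sq : g1^2 ≤ 1 := by nlinarith [Knonneg l1 m1]
  set s := Real.sqrt (1 - g1^2) with hsdef
  have hs0 : 0 ≤ s := Real.sqrt_nonneg _
  have hssq : s^2 = 1 - g1^2 := Real.sq_sqrt (by linarith)
  have hs1 : s ≤ 1 := by nlinarith
  obtain ⟨hle, heq⟩ := twoD s l1 m1 l2 m2 hs0 hs1 (by linarith) (by linarith) (by linarith)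
    (by nlinarith [sq_nonneg g2]) (by nlinarith [sq_nonneg g2]) (by nlinarith [sq_nonneg g2])
  have hgg : 0 ≤ g2 * (2*g1 - g2) := mul_nonneg hg2 (by linarith)
  constructor
  · nlinarith [hle, hgg, hssq]
  · intro he
    have hup : g2*(2*g1-g2) ≤ 0 := by nlinarith [hle, he, hssq]
    have hg20 : g2 = 0 := by
      by_contra hcon
      have hpos : 0 < g2 := lt_of_le_of_ne hg2 (Ne.symm hcon)
      nlinarith [hup, mul_pos hpos (show (0:ℝ) < 2*g1-g2 by linarith)]
    subst hg20
    have hKeq : (l1-l2)^2 + (l1-l2)*(m1-m2) + (m1-m2)^2 = s^2 := by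
      linear_combination he - hssq
    rcases heq hKeq with h|⟨h, hs1'⟩
    · right
      rcases h with ⟨ha, hb⟩|⟨ha, hb⟩|⟨ha, hb⟩
      · exact Or.inl ⟨ha, hb, rfl⟩
      · exact Or.inr (Or.inl ⟨ha, hb, rfl⟩)
      · exact Or.inr (Or.inr ⟨ha, hb, rfl⟩)
    · left
      have hg1sq0 : g1^2 = 0 := by
        have : s^2 = 1 := by rw [hs1']; norm_num
        linarith [hssq]
      have hg10 : g1 = 0 := pow_eq_zero_iff two_ne_zero |>.mp hg1sq0
      rcases h with ⟨ha, hb⟩|⟨ha, hb⟩|⟨ha, hb⟩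
      · exact Or.inl ⟨ha, hb, hg10⟩
      · exact Or.inr (Or.inl ⟨ha, hb, hg10⟩)
      · exact Or.inr (Or.inr ⟨ha, hb, hg10⟩)

set_option maxHeartbeats 1000000 in
private lemma mainB (l1 m1 g1 l2 m2 g2 : ℝ) (hg2 : 0 < g2) (hg : g2 ≤ g1)
    (hA1 : l1^2 + l1*m1 + m1^2 + g1^2 ≤ 1)
    (hA2 : (l1-1)^2 + (l1-1)*m1 + m1^2 + g1^2 ≤ 1)
    (hA3 : l1^2 + l1*(m1-1) + (m1-1)^2 + g1^2 ≤ 1)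
    (hB1 : l2^2 + l2*m2 + m2^2 + g2^2 ≤ 1)
    (hB2 : (l2-1)^2 + (l2-1)*m2 + m2^2 + g2^2 ≤ 1)
    (hB3 : l2^2 + l2*(m2-1) + (m2-1)^2 + g2^2 ≤ 1) :
    (l1-l2)^2 + (l1-l2)*(m1-m2) + (m1-m2)^2 + (g1-g2)^2 < 1 := by
  have hg1 : 0 < g1 := lt_of_lt_of_le hg2 hg
  have hg1sq : g1^2 ≤ 1 := by nlinarith [Knonneg l1 m1]
  set s := Real.sqrt (1 - g1^2) with hsdef
  have hs0 : 0 ≤ s := Real.sqrt_nonneg _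
  have hssq : s^2 = 1 - g1^2 := Real.sq_sqrt (by linarith)
  have hs1 : s ≤ 1 := by nlinarith
  obtain ⟨hle, _⟩ := twoD s l1 m1 l2 m2 hs0 hs1 (by linarith) (by linarith) (by linarith)
    (by nlinarith [sq_nonneg g2]) (by nlinarith [sq_nonneg g2]) (by nlinarith [sq_nonneg g2])
  have hgg : 0 < g2 * (2*g1 - g2) := mul_pos hg2 (by linarith)
  nlinarith [hle, hgg, hssq]

private lemma cancel_nonneg {g N : ℝ} (hN : 0 < N) (h : 0 ≤ g * N) : 0 ≤ g := by nlinarith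
private lemma cancel_le {g1 g2 N : ℝ} (hN : 0 < N) (h : g2 * N ≤ g1 * N) : g2 ≤ g1 := by nlinarith
private lemma cancel_neg {g N : ℝ} (hN : 0 < N) (h : g * N < 0) : g < 0 := by nlinarith
private lemma aux_pos_sq {x y : ℝ} (hx : 0 ≤ x) (h : x^2 = y) (hy : 0 < y) : 0 < x := by nlinarith
private lemma sqle {d e : ℝ} (hd : 0 ≤ d) (he : 0 ≤ e) (h : d^2 ≤ e^2) : d ≤ e := by nlinarith
private lemma sqlt {d e : ℝ} (hd : 0 ≤ d) (he : 0 ≤ e) (h : d^2 < e^2) : d < e := by nlinarith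
private lemma conv_le {c d K g : ℝ} (hc : 0 < c) (hd : d^2 = K*c^2 + g^2)
    (hd0 : 0 ≤ d) (hdc : d ≤ c) : K + (g/c)^2 ≤ 1 := by
  have hc2 : (0:ℝ) < c^2 := by positivity
  have h1 : d^2 ≤ c^2 := by nlinarith
  have h2 : (g/c)^2 * c^2 = g^2 := by field_simp
  nlinarith [h1, h2, hc2]
private lemma normed_le {D KK G c2 gdiff : ℝ} (hc2 : 0 < c2) (hD : D = KK*c2 + gdiff)
    (hgg : G*c2 = gdiff) (hle : KK + G ≤ 1) : D ≤ c2 := by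
  nlinarith [mul_le_mul_of_nonneg_right hle hc2.le]
private lemma normed_lt {D KK G c2 gdiff : ℝ} (hc2 : 0 < c2) (hD : D = KK*c2 + gdiff)
    (hgg : G*c2 = gdiff) (hlt : KK + G < 1) : D < c2 := by
  nlinarith [mul_lt_mul_of_pos_right hlt hc2]
private lemma normed_eq {D KK G c2 gdiff : ℝ} (hc2 : 0 < c2) (hD : D = KK*c2 + gdiff)
    (hgg : G*c2 = gdiff) (hDe : D = c2) : KK + G = 1 := by
  have h : (KK + G) * c2 = 1 * c2 := by linear_combination hDe - hD + hgg
  exact mul_right_cancel₀ (ne_of_gt hc2) h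

open scoped RealInnerProductSpace

/-- Let `P₁ P₂ P₃` be an equilateralset_option maxHeartbeats 2000000 in
 triangle of side `c > 0` in `ℝ³`, and let
`n` be a nonzero normal vector to the plane `Π` through `P₁, P₂, P₃`.  The closed
half-space `R⁺ = {Q : ⟪Q - P₁, n⟫ ≥ 0}` contains `Π`, and `R⁻ = {Q : ⟪Q - P₁, n⟫ < 0}`
is the complementary open half-space.  With
`S⁺ = {Q ∈ R⁺ : dist Pᵢ Q ≤ c, i = 1,2,3}` and `S⁻ = {Q ∈ R⁻ : dist Pᵢ Q ≤ c, i = 1,2,3}`: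
(a) any `Q₁, Q₂ ∈ S⁺` satisfy `dist Q₁ Q₂ ≤ c`, with equality only if `Q₁` or `Q₂`
is one of the `Pᵢ`; (b) any `Q₁, Q₂ ∈ S⁻` satisfy `dist Q₁ Q₂ < c`. -/
theorem stmt_10 (P₁ P₂ P₃ : EuclideanSpace ℝ (Fin 3)) (c : ℝ) (hc : 0 < c)
    (h12 : dist P₁ P₂ = c) (h23 : dist P₂ P₃ = c) (h31 : dist P₃ P₁ = c)
    (n : EuclideanSpace ℝ (Fin 3)) (hn : n ≠ 0)
    (hn2 : ⟪P₂ - P₁, n⟫ = 0) (hn3 : ⟪P₃ - P₁, n⟫ = 0) :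
    (∀ Q₁ Q₂ : EuclideanSpace ℝ (Fin 3),
      0 ≤ ⟪Q₁ - P₁, n⟫ → dist P₁ Q₁ ≤ c → dist P₂ Q₁ ≤ c → dist P₃ Q₁ ≤ c →
      0 ≤ ⟪Q₂ - P₁, n⟫ → dist P₁ Q₂ ≤ c → dist P₂ Q₂ ≤ c → dist P₃ Q₂ ≤ c →
      dist Q₁ Q₂ ≤ c ∧ (dist Q₁ Q₂ = c →
        Q₁ ∈ ({P₁, P₂, P₃} : Set (EuclideanSpace ℝ (Fin 3))) ∨
        Q₂ ∈ ({P₁, P₂, P₃} : Set (EuclideanSpace ℝ (Fin 3))))) ∧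
    (∀ Q₁ Q₂ : EuclideanSpace ℝ (Fin 3),
      ⟪Q₁ - P₁, n⟫ < 0 → dist P₁ Q₁ ≤ c → dist P₂ Q₁ ≤ c → dist P₃ Q₁ ≤ c →
      ⟪Q₂ - P₁, n⟫ < 0 → dist P₁ Q₂ ≤ c → dist P₂ Q₂ ≤ c → dist P₃ Q₂ ≤ c →
      dist Q₁ Q₂ < c) := by
  have hcn : c ≠ 0 := ne_of_gt hc
  set a : EuclideanSpace ℝ (Fin 3) := P₂ - P₁ with ha
  set b : EuclideanSpace ℝ (Fin 3) := P₃ - P₁ with hb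
  have hna : ‖a‖ = c := by rw [ha, ← dist_eq_norm, dist_comm]; exact h12
  have hnb : ‖b‖ = c := by rw [hb, ← dist_eq_norm]; exact h31
  have hnab : ‖a - b‖ = c := by
    have h : a - b = P₂ - P₃ := by rw [ha, hb]; abel
    rw [h, ← dist_eq_norm]; exact h23
  have haa : ⟪a, a⟫ = c^2 := by rw [real_inner_self_eq_norm_sq, hna]
  have hbb : ⟪b, b⟫ = c^2 := by rw [real_inner_self_eq_norm_sq, hnb]
  have hab : ⟪a, b⟫ = c^2/2 := by
    have h := norm_sub_sq_real a b
    rw [hna, hnb, hnab] at h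
    linarith
  have hba : ⟪b, a⟫ = c^2/2 := by rw [real_inner_comm]; exact hab
  have hnn : ‖n‖ ≠ 0 := norm_ne_zero_iff.mpr hn
  have hnpos : 0 < ‖n‖ := norm_pos_iff.mpr hn
  set ν : EuclideanSpace ℝ (Fin 3) := ‖n‖⁻¹ • n with hν
  have hvv : ⟪ν, ν⟫ = 1 := by
    rw [hν, real_inner_smul_left, real_inner_smul_right, real_inner_self_eq_norm_sq]
    field_simp
    try ring
  have hav : ⟪a, ν⟫ = 0 := by rw [hν, real_inner_smul_right, hn2, mul_zero]
  have hbv : ⟪b, ν⟫ = 0 := by rw [hν, real_inner_smul_right, hn3, mul_zero]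
  have hva : ⟪ν, a⟫ = 0 := by rw [real_inner_comm]; exact hav
  have hvb : ⟪ν, b⟫ = 0 := by rw [real_inner_comm]; exact hbv
  have hvn : ⟪ν, n⟫ = ‖n‖ := by
    rw [hν, real_inner_smul_left, real_inner_self_eq_norm_sq]
    rw [pow_two, ← mul_assoc, inv_mul_cancel₀ hnn, one_mul]
  have hnorm : ∀ l m g : ℝ, ‖l • a + m • b + g • ν‖^2 = (l^2 + l*m + m^2)*c^2 + g^2 := by
    intro l m g
    rw [← real_inner_self_eq_norm_sq]
    simp only [inner_add_left, inner_add_right, real_inner_smul_left, real_inner_smul_right,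
      haa, hbb, hab, hba, hav, hbv, hva, hvb, hvv]
    ring
  have hinn : ∀ l m g : ℝ, ⟪l • a + m • b + g • ν, n⟫ = g * ‖n‖ := by
    intro l m g
    simp only [inner_add_left, real_inner_smul_left, hn2, hn3, hvn]
    ring
  set e₂ : EuclideanSpace ℝ (Fin 3) := b - (2⁻¹ : ℝ) • a with he₂
  have he2sq : ‖e₂‖^2 = 3*c^2/4 := by
    rw [← real_inner_self_eq_norm_sq, he₂]
    simp only [inner_sub_left, inner_sub_right, real_inner_smul_left, real_inner_smul_right,
      haa, hbb, hab, hba]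
    ring
  have he2pos : 0 < ‖e₂‖ := aux_pos_sq (norm_nonneg e₂) he2sq (by positivity)
  have he2nz : ‖e₂‖ ≠ 0 := ne_of_gt he2pos
  have hae2 : ⟪a, e₂⟫ = 0 := by
    rw [he₂]; simp only [inner_sub_right, real_inner_smul_right, haa, hab]; ring
  have he2a : ⟪e₂, a⟫ = 0 := by rw [real_inner_comm]; exact hae2
  have he2v : ⟪e₂, ν⟫ = 0 := by
    rw [he₂]; simp only [inner_sub_left, real_inner_smul_left, hbv, hav]; ring
  have hve2 : ⟪ν, e₂⟫ = 0 := by rw [real_inner_comm]; exact he2v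
  have he2e2 : ⟪e₂, e₂⟫ = ‖e₂‖^2 := real_inner_self_eq_norm_sq e₂
  set f : Fin 3 → EuclideanSpace ℝ (Fin 3) := ![c⁻¹ • a, ‖e₂‖⁻¹ • e₂, ν] with hf
  have hcc : c⁻¹ * (c⁻¹ * c^2) = 1 := by field_simp; try ring
  have hee : ‖e₂‖⁻¹ * (‖e₂‖⁻¹ * ‖e₂‖^2) = 1 := by field_simp; try ring
  have hon : Orthonormal ℝ f := by
    rw [orthonormal_iff_ite]
    intro i j
    fin_cases i <;> fin_cases j
    · show ⟪c⁻¹ • a, c⁻¹ • a⟫ = if (0 : Fin 3) = 0 then (1:ℝ) else 0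
      rw [if_pos rfl, real_inner_smul_left, real_inner_smul_right, haa]; exact hcc
    · show ⟪c⁻¹ • a, ‖e₂‖⁻¹ • e₂⟫ = if (0 : Fin 3) = 1 then (1:ℝ) else 0
      rw [if_neg (by decide), real_inner_smul_left, real_inner_smul_right, hae2]; ring
    · show ⟪c⁻¹ • a, ν⟫ = if (0 : Fin 3) = 2 then (1:ℝ) else 0
      rw [if_neg (by decide), real_inner_smul_left, hav]; ring
    · show ⟪‖e₂‖⁻¹ • e₂, c⁻¹ • a⟫ = if (1 : Fin 3) = 0 then (1:ℝ) else 0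
      rw [if_neg (by decide), real_inner_smul_left, real_inner_smul_right, he2a]; ring
    · show ⟪‖e₂‖⁻¹ • e₂, ‖e₂‖⁻¹ • e₂⟫ = if (1 : Fin 3) = 1 then (1:ℝ) else 0
      rw [if_pos rfl, real_inner_smul_left, real_inner_smul_right, he2e2]; exact hee
    · show ⟪‖e₂‖⁻¹ • e₂, ν⟫ = if (1 : Fin 3) = 2 then (1:ℝ) else 0
      rw [if_neg (by decide), real_inner_smul_left, he2v]; ring
    · show ⟪ν, c⁻¹ • a⟫ = if (2 : Fin 3) = 0 then (1:ℝ) else 0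
      rw [if_neg (by decide), real_inner_smul_right, hva]; ring
    · show ⟪ν, ‖e₂‖⁻¹ • e₂⟫ = if (2 : Fin 3) = 1 then (1:ℝ) else 0
      rw [if_neg (by decide), real_inner_smul_right, hve2]; ring
    · show ⟪ν, ν⟫ = if (2 : Fin 3) = 2 then (1:ℝ) else 0
      rw [if_pos rfl]; exact hvv
  have hcard : Fintype.card (Fin 3) = Module.finrank ℝ (EuclideanSpace ℝ (Fin 3)) := by
    simp
  have hdec : ∀ w : EuclideanSpace ℝ (Fin 3), ∃ l m g : ℝ, w = l • a + m • b + g • ν := by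
    intro w
    have hw := (basisOfLinearIndependentOfCardEqFinrank hon.linearIndependent hcard).sum_repr w
    rw [Fin.sum_univ_three] at hw
    simp only [coe_basisOfLinearIndependentOfCardEqFinrank] at hw
    obtain ⟨x0, x1, x2, hw⟩ : ∃ x0 x1 x2 : ℝ, x0 • f 0 + x1 • f 1 + x2 • f 2 = w :=
      ⟨_, _, _, hw⟩
    simp only [hf, Matrix.cons_val_zero, Matrix.cons_val_one, Matrix.head_cons,
      Matrix.cons_val_two, Matrix.tail_cons] at hw
    refine ⟨x0*c⁻¹ - x1*‖e₂‖⁻¹*2⁻¹, x1*‖e₂‖⁻¹, x2, ?_⟩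
    rw [← hw, he₂]
    module
  have hsq : ∀ Q : EuclideanSpace ℝ (Fin 3), ∃ l m g : ℝ,
      dist P₁ Q ^2 = (l^2 + l*m + m^2)*c^2 + g^2 ∧
      dist P₂ Q ^2 = ((l-1)^2 + (l-1)*m + m^2)*c^2 + g^2 ∧
      dist P₃ Q ^2 = (l^2 + l*(m-1) + (m-1)^2)*c^2 + g^2 ∧
      ⟪Q - P₁, n⟫ = g * ‖n‖ ∧
      Q - P₁ = l • a + m • b + g • ν := by
    intro Q
    obtain ⟨l, m, g, hQ⟩ := hdec (Q - P₁)
    refine ⟨l, m, g, ?_, ?_, ?_, ?_, hQ⟩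
    · rw [dist_comm, dist_eq_norm, hQ, hnorm]
    · have h2 : Q - P₂ = (l-1) • a + m • b + g • ν := by
        have h : Q - P₂ = (Q - P₁) - a := by rw [ha]; abel
        rw [h, hQ]; module
      rw [dist_comm, dist_eq_norm, h2, hnorm]
    · have h3 : Q - P₃ = l • a + (m-1) • b + g • ν := by
        have h : Q - P₃ = (Q - P₁) - b := by rw [hb]; abel
        rw [h, hQ]; module
      rw [dist_comm, dist_eq_norm, h3, hnorm]
    · rw [hQ, hinn]
  have hdistsq : ∀ (Q₁ Q₂ : EuclideanSpace ℝ (Fin 3)) (l1 m1 g1 l2 m2 g2 : ℝ),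
      Q₁ - P₁ = l1 • a + m1 • b + g1 • ν → Q₂ - P₁ = l2 • a + m2 • b + g2 • ν →
      dist Q₁ Q₂ ^2 = ((l1-l2)^2 + (l1-l2)*(m1-m2) + (m1-m2)^2)*c^2 + (g1-g2)^2 := by
    intro Q₁ Q₂ l1 m1 g1 l2 m2 g2 hq1 hq2
    have h3 : Q₁ - Q₂ = (l1-l2) • a + (m1-m2) • b + (g1-g2) • ν := by
      have h : Q₁ - Q₂ = (Q₁ - P₁) - (Q₂ - P₁) := by abel
      rw [h, hq1, hq2]; module
    rw [dist_eq_norm, h3, hnorm]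
  have hc2 : (0:ℝ) < c^2 := by positivity
  have hvert : ∀ (Q : EuclideanSpace ℝ (Fin 3)) (l m g : ℝ),
      Q - P₁ = l • a + m • b + g • ν →
      ((l = 0 ∧ m = 0 ∧ g = 0) ∨ (l = 1 ∧ m = 0 ∧ g = 0) ∨ (l = 0 ∧ m = 1 ∧ g = 0)) →
      Q ∈ ({P₁, P₂, P₃} : Set (EuclideanSpace ℝ (Fin 3))) := by
    intro Q l m g hQ h
    rcases h with ⟨h1,h2,h3⟩|⟨h1,h2,h3⟩|⟨h1,h2,h3⟩
    · subst h1; subst h2; subst h3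
      have h0 : Q - P₁ = 0 := by rw [hQ]; module
      have : Q = P₁ := by
        have := sub_eq_zero.mp h0
        exact this
      rw [this]; simp
    · subst h1; subst h2; subst h3
      have h0 : Q - P₁ = a := by rw [hQ]; module
      have : Q = P₂ := by
        rw [ha] at h0
        have h1 : Q = P₂ - P₁ + P₁ := by rw [← h0]; abel
        rw [h1]; abel
      rw [this]; simp
    · subst h1; subst h2; subst h3
      have h0 : Q - P₁ = b := by rw [hQ]; module
      have : Q = P₃ := by
        rw [hb] at h0
        have h1 : Q = P₃ - P₁ + P₁ := by rw [← h0]; abel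
        rw [h1]; abel
      rw [this]; simp
  have hdivz : ∀ x : ℝ, x/c = 0 → x = 0 := by
    intro x h
    rcases div_eq_zero_iff.mp h with h'|h'
    · exact h'
    · exact absurd h' hcn
  -- Part (a) auxiliary, assuming inner-product ordering
  have auxA : ∀ Q₁ Q₂ : EuclideanSpace ℝ (Fin 3),
      0 ≤ ⟪Q₁ - P₁, n⟫ → dist P₁ Q₁ ≤ c → dist P₂ Q₁ ≤ c → dist P₃ Q₁ ≤ c →
      0 ≤ ⟪Q₂ - P₁, n⟫ → dist P₁ Q₂ ≤ c → dist P₂ Q₂ ≤ c → dist P₃ Q₂ ≤ c →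
      ⟪Q₂ - P₁, n⟫ ≤ ⟪Q₁ - P₁, n⟫ →
      dist Q₁ Q₂ ≤ c ∧ (dist Q₁ Q₂ = c →
        Q₁ ∈ ({P₁, P₂, P₃} : Set (EuclideanSpace ℝ (Fin 3))) ∨
        Q₂ ∈ ({P₁, P₂, P₃} : Set (EuclideanSpace ℝ (Fin 3)))) := by
    intro Q₁ Q₂ hs1 hd11 hd21 hd31 hs2 hd12 hd22 hd32 hord
    obtain ⟨l1, m1, g1, hq11, hq21, hq31, hip1, hdec1⟩ := hsq Q₁
    obtain ⟨l2, m2, g2, hq12, hq22, hq32, hip2, hdec2⟩ := hsq Q₂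
    rw [hip1] at hs1
    rw [hip2] at hs2
    rw [hip1, hip2] at hord
    have hg1 : 0 ≤ g1 := cancel_nonneg hnpos hs1
    have hg2 : 0 ≤ g2 := cancel_nonneg hnpos hs2
    have hord' : g2 ≤ g1 := cancel_le hnpos hord
    have hA1 := conv_le hc hq11 dist_nonneg hd11
    have hA2 := conv_le hc hq21 dist_nonneg hd21
    have hA3 := conv_le hc hq31 dist_nonneg hd31
    have hB1 := conv_le hc hq12 dist_nonneg hd12
    have hB2 := conv_le hc hq22 dist_nonneg hd22
    have hB3 := conv_le hc hq32 dist_nonneg hd32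
    obtain ⟨hle, heq⟩ := mainA l1 m1 (g1/c) l2 m2 (g2/c)
      (div_nonneg hg2 hc.le) ((div_le_div_iff_of_pos_right hc).mpr hord') hA1 hA2 hA3 hB1 hB2 hB3
    have hdsq := hdistsq Q₁ Q₂ l1 m1 g1 l2 m2 g2 hdec1 hdec2
    have hgg : (g1/c - g2/c)^2 * c^2 = (g1-g2)^2 := by field_simp; try ring
    constructor
    · exact sqle dist_nonneg hc.le (normed_le hc2 hdsq hgg hle)
    · intro hdc
      have hd2 : dist Q₁ Q₂ ^2 = c^2 := by rw [hdc]
      have h1' := normed_eq hc2 hdsq hgg hd2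
      rcases heq h1' with h|h
      · refine Or.inl (hvert Q₁ l1 m1 g1 hdec1 ?_)
        rcases h with ⟨u,v,w⟩|⟨u,v,w⟩|⟨u,v,w⟩
        · exact Or.inl ⟨u, v, hdivz _ w⟩
        · exact Or.inr (Or.inl ⟨u, v, hdivz _ w⟩)
        · exact Or.inr (Or.inr ⟨u, v, hdivz _ w⟩)
      · refine Or.inr (hvert Q₂ l2 m2 g2 hdec2 ?_)
        rcases h with ⟨u,v,w⟩|⟨u,v,w⟩|⟨u,v,w⟩
        · exact Or.inl ⟨u, v, hdivz _ w⟩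
        · exact Or.inr (Or.inl ⟨u, v, hdivz _ w⟩)
        · exact Or.inr (Or.inr ⟨u, v, hdivz _ w⟩)
  -- Part (b) auxiliary
  have auxB : ∀ Q₁ Q₂ : EuclideanSpace ℝ (Fin 3),
      ⟪Q₁ - P₁, n⟫ < 0 → dist P₁ Q₁ ≤ c → dist P₂ Q₁ ≤ c → dist P₃ Q₁ ≤ c →
      ⟪Q₂ - P₁, n⟫ < 0 → dist P₁ Q₂ ≤ c → dist P₂ Q₂ ≤ c → dist P₃ Q₂ ≤ c →
      ⟪Q₁ - P₁, n⟫ ≤ ⟪Q₂ - P₁, n⟫ →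
      dist Q₁ Q₂ < c := by
    intro Q₁ Q₂ hs1 hd11 hd21 hd31 hs2 hd12 hd22 hd32 hord
    obtain ⟨l1, m1, g1, hq11, hq21, hq31, hip1, hdec1⟩ := hsq Q₁
    obtain ⟨l2, m2, g2, hq12, hq22, hq32, hip2, hdec2⟩ := hsq Q₂
    rw [hip1] at hs1
    rw [hip2] at hs2
    rw [hip1, hip2] at hord
    have hg1 : g1 < 0 := cancel_neg hnpos hs1
    have hg2 : g2 < 0 := cancel_neg hnpos hs2
    have hord' : g1 ≤ g2 := cancel_le hnpos hord
    have hA1 := conv_le (K := l1^2 + l1*m1 + m1^2) (g := -g1) hc (by rw [hq11]; ring) dist_nonneg hd11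
    have hA2 := conv_le (K := (l1-1)^2 + (l1-1)*m1 + m1^2) (g := -g1) hc (by rw [hq21]; ring) dist_nonneg hd21
    have hA3 := conv_le (K := l1^2 + l1*(m1-1) + (m1-1)^2) (g := -g1) hc (by rw [hq31]; ring) dist_nonneg hd31
    have hB1 := conv_le (K := l2^2 + l2*m2 + m2^2) (g := -g2) hc (by rw [hq12]; ring) dist_nonneg hd12
    have hB2 := conv_le (K := (l2-1)^2 + (l2-1)*m2 + m2^2) (g := -g2) hc (by rw [hq22]; ring) dist_nonneg hd22
    have hB3 := conv_le (K := l2^2 + l2*(m2-1) + (m2-1)^2) (g := -g2) hc (by rw [hq32]; ring) dist_nonneg hd32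
    have hlt := mainB l1 m1 ((-g1)/c) l2 m2 ((-g2)/c)
      (div_pos (by linarith) hc) ((div_le_div_iff_of_pos_right hc).mpr (by linarith)) hA1 hA2 hA3 hB1 hB2 hB3
    have hdsq := hdistsq Q₁ Q₂ l1 m1 g1 l2 m2 g2 hdec1 hdec2
    have hgg : ((-g1)/c - (-g2)/c)^2 * c^2 = (g1-g2)^2 := by field_simp; try ring
    exact sqlt dist_nonneg hc.le (normed_lt hc2 hdsq hgg hlt)
  constructor
  · intro Q₁ Q₂ h1 h2 h3 h4 h5 h6 h7 h8
    rcases le_total ⟪Q₂ - P₁, n⟫ ⟪Q₁ - P₁, n⟫ with ho|ho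
    · exact auxA Q₁ Q₂ h1 h2 h3 h4 h5 h6 h7 h8 ho
    · obtain ⟨u, v⟩ := auxA Q₂ Q₁ h5 h6 h7 h8 h1 h2 h3 h4 ho
      exact ⟨by rwa [dist_comm], fun he => (v (by rwa [dist_comm] at he)).symm⟩
  · intro Q₁ Q₂ h1 h2 h3 h4 h5 h6 h7 h8
    rcases le_total ⟪Q₁ - P₁, n⟫ ⟪Q₂ - P₁, n⟫ with ho|ho
    · exact auxB Q₁ Q₂ h1 h2 h3 h4 h5 h6 h7 h8 ho
    · have := auxB Q₂ Q₁ h5 h6 h7 h8 h1 h2 h3 h4 ho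
      rwa [dist_comm]
end

section
/- Let G be a simple graph on 12 vertices that is triangle-free (contains no K₃) and whose independence number satisfies α(G) < 5. Then every vertex v of G has degree 3 or 4. -/
/-- Helper: triangle-free means no three pairwise adjacent vertices. -/
lemma cf3 {V : Type*} [DecidableEq V] {G : SimpleGraph V} (hfree : G.CliqueFree 3)
    {a b c : V} (hab : G.Adj a b) (hac : G.Adj a c) (hbc : G.Adj b c) : False :=
  hfree {a, b, c} (SimpleGraph.is3Clique_triple_iff.mpr ⟨hab, hac, hbc⟩)

/-- R(3,3): any 6 vertices of a triangle-free graph contain an independent 3-set. -/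
lemma R33 {X : Type*} [Fintype X] [DecidableEq X] (G : SimpleGraph X)
    [DecidableRel G.Adj] (hfree : G.CliqueFree 3) (A : Finset X) (hA : 6 ≤ A.card) :
    ∃ s : Finset X, s ⊆ A ∧ (∀ v ∈ s, ∀ w ∈ s, ¬ G.Adj v w) ∧ s.card = 3 := by
  obtain ⟨v, hv⟩ : A.Nonempty := Finset.card_pos.mp (by omega)
  set N : Finset X := A.filter (fun w => G.Adj v w) with hN
  set M : Finset X := A \ insert v N with hM
  by_cases hex : ∃ a ∈ M, ∃ b ∈ M, a ≠ b ∧ ¬ G.Adj a b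
  · obtain ⟨a, ha, b, hb, hab, hnadj⟩ := hex
    have haA : a ∈ A := (Finset.mem_sdiff.mp ha).1
    have hbA : b ∈ A := (Finset.mem_sdiff.mp hb).1
    have hav : ¬ G.Adj v a := by
      intro h
      exact (Finset.mem_sdiff.mp ha).2 (Finset.mem_insert_of_mem (Finset.mem_filter.mpr ⟨haA, h⟩))
    have hbv : ¬ G.Adj v b := by
      intro h
      exact (Finset.mem_sdiff.mp hb).2 (Finset.mem_insert_of_mem (Finset.mem_filter.mpr ⟨hbA, h⟩))
    have hva : v ≠ a := fun h => (Finset.mem_sdiff.mp ha).2 (by simp [← h])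
    have hvb : v ≠ b := fun h => (Finset.mem_sdiff.mp hb).2 (by simp [← h])
    refine ⟨{v, a, b}, ?_, ?_, ?_⟩
    · intro x hx
      simp only [Finset.mem_insert, Finset.mem_singleton] at hx
      rcases hx with h | h | h <;> subst h <;> assumption
    · intro x hx y hy
      simp only [Finset.mem_insert, Finset.mem_singleton] at hx hy
      rcases hx with h | h | h <;> rcases hy with h' | h' | h' <;> subst h <;> subst h' <;>
        simp_all [SimpleGraph.adj_comm] <;> exact fun h => hnadj h.symm
    · rw [Finset.card_insert_of_notMem (by simp [hva, hvb]),
        Finset.card_insert_of_notMem (by simp [hab]), Finset.card_singleton]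
  · push_neg at hex
    -- M is a clique, so |M| ≤ 2, hence |N| ≥ 3
    have hM2 : M.card ≤ 2 := by
      by_contra h
      obtain ⟨t, htM, ht3⟩ := Finset.exists_subset_card_eq (show 3 ≤ M.card by omega)
      obtain ⟨a, b, c, hab, hac, hbc, rfl⟩ := Finset.card_eq_three.mp ht3
      have ha := htM (by simp : a ∈ ({a,b,c} : Finset X))
      have hb := htM (by simp : b ∈ ({a,b,c} : Finset X))
      have hc := htM (by simp : c ∈ ({a,b,c} : Finset X))
      exact cf3 hfree (hex a ha b hb hab) (hex a ha c hc hac) (hex b hb c hc hbc)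
    have hcard : A.card ≤ M.card + (insert v N).card := by
      have := Finset.card_sdiff_add_card (s := A) (t := insert v N)
      calc A.card ≤ (A ∪ insert v N).card := Finset.card_le_card (Finset.subset_union_left)
        _ = M.card + (insert v N).card := by rw [← this]
    have hNcard : 3 ≤ N.card := by
      have := Finset.card_insert_le v N
      omega
    obtain ⟨s, hsN, hs3⟩ := Finset.exists_subset_card_eq hNcard
    refine ⟨s, ?_, ?_, hs3⟩
    · exact hsN.trans (Finset.filter_subset _ _)
    · intro a ha b hb hadj
      have haN := Finset.mem_filter.mp (hsN ha)
      have hbN := Finset.mem_filter.mp (hsN hb)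
      exact cf3 hfree haN.2 hbN.2 hadj

/-- R(3,4) = 9: a triangle-free graph on 9 vertices with independence number ≤ 3
is impossible. -/
lemma B9 {X : Type*} [Fintype X] [DecidableEq X] (G : SimpleGraph X)
    [DecidableRel G.Adj] (hX : Fintype.card X = 9) (hfree : G.CliqueFree 3)
    (hindep : ∀ s : Finset X, (∀ v ∈ s, ∀ w ∈ s, ¬ G.Adj v w) → s.card ≤ 3) : False := by
  have hdeg : ∀ v : X, G.degree v = 3 := by
    intro v
    have hle : G.degree v ≤ 3 := by
      rw [← SimpleGraph.card_neighborFinset_eq_degree]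
      apply hindep
      intro a ha b hb hadj
      rw [SimpleGraph.mem_neighborFinset] at ha hb
      exact cf3 hfree ha hb hadj
    have hge : 3 ≤ G.degree v := by
      by_contra h
      push_neg at h
      set M : Finset X := Finset.univ \ insert v (G.neighborFinset v) with hMdef
      have hMcard : 6 ≤ M.card := by
        have h1 : (insert v (G.neighborFinset v)).card ≤ 1 + G.degree v := by
          have := Finset.card_insert_le v (G.neighborFinset v)
          rw [SimpleGraph.card_neighborFinset_eq_degree] at this
          omega
        have h2 : M.card = Fintype.card X - (insert v (G.neighborFinset v)).card := by
          rw [hMdef, Finset.card_sdiff_of_subset (Finset.subset_univ _), Finset.card_univ]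
        have h3 : (insert v (G.neighborFinset v)).card ≤ Fintype.card X :=
          Finset.card_le_card (Finset.subset_univ _) |>.trans_eq Finset.card_univ
        omega
      obtain ⟨s, hsM, hsi, hs3⟩ := R33 G hfree M hMcard
      have hvs : v ∉ s := by
        intro hv
        have := Finset.mem_sdiff.mp (hsM hv)
        exact this.2 (Finset.mem_insert_self _ _)
      have : (insert v s).card ≤ 3 := by
        apply hindep
        intro a ha b hb hadj
        have key : ∀ x ∈ s, ¬ G.Adj v x := by
          intro x hx hadjx
          have := Finset.mem_sdiff.mp (hsM hx)
          exact this.2 (Finset.mem_insert_of_mem (by rw [SimpleGraph.mem_neighborFinset]; exact hadjx))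
        simp only [Finset.mem_insert] at ha hb
        rcases ha with rfl | ha <;> rcases hb with rfl | hb
        · exact G.irrefl hadj
        · exact key b hb hadj
        · exact key a ha hadj.symm
        · exact hsi a ha b hb hadj
      rw [Finset.card_insert_of_notMem hvs, hs3] at this
      omega
    omega
  have hsum := G.sum_degrees_eq_twice_card_edges
  rw [Finset.sum_congr rfl (fun v _ => hdeg v), Finset.sum_const, Finset.card_univ, hX, smul_eq_mul] at hsum
  omega

/-- In a triangle-free simple graph on 12 vertices whose independence number is
less than 5 (every independent set has at most 4 vertices), every vertex has
degree 3 or 4. -/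
theorem stmt_12 {V : Type*} [Fintype V] [DecidableEq V]
    (G : SimpleGraph V) [DecidableRel G.Adj]
    (hV : Fintype.card V = 12) (hfree : G.CliqueFree 3)
    (hindep : ∀ s : Finset V, (∀ v ∈ s, ∀ w ∈ s, ¬ G.Adj v w) → s.card ≤ 4) :
    ∀ v : V, G.degree v = 3 ∨ G.degree v = 4 := by
  intro v
  have hle : G.degree v ≤ 4 := by
    rw [← SimpleGraph.card_neighborFinset_eq_degree]
    apply hindep
    intro a ha b hb hadj
    rw [SimpleGraph.mem_neighborFinset] at ha hb
    exact cf3 hfree ha hb hadj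
  have hge : 3 ≤ G.degree v := by
    by_contra h
    push_neg at h
    set M : Finset V := Finset.univ \ insert v (G.neighborFinset v) with hMdef
    have hMcard : 9 ≤ M.card := by
      have h1 : (insert v (G.neighborFinset v)).card ≤ 1 + G.degree v := by
        have := Finset.card_insert_le v (G.neighborFinset v)
        rw [SimpleGraph.card_neighborFinset_eq_degree] at this
        omega
      have h2 : M.card = Fintype.card V - (insert v (G.neighborFinset v)).card := by
        rw [hMdef, Finset.card_sdiff_of_subset (Finset.subset_univ _), Finset.card_univ]
      have h3 : (insert v (G.neighborFinset v)).card ≤ Fintype.card V :=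
        Finset.card_le_card (Finset.subset_univ _) |>.trans_eq Finset.card_univ
      omega
    obtain ⟨M', hM'M, hM'9⟩ := Finset.exists_subset_card_eq hMcard
    -- induce on M'
    let G' : SimpleGraph ↥M' := G.induce (M' : Set V)
    haveI : DecidableRel G'.Adj := fun a b => ‹DecidableRel G.Adj› a b
    have hcard9 : Fintype.card ↥M' = 9 := by
      rw [Fintype.card_coe]; exact hM'9
    have hfree' : G'.CliqueFree 3 := by
      intro t ht
      rw [SimpleGraph.is3Clique_iff] at ht
      obtain ⟨a, b, c, hab, hac, hbc, rfl⟩ := ht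
      exact cf3 hfree hab hac hbc
    have hindep' : ∀ s : Finset ↥M', (∀ a ∈ s, ∀ b ∈ s, ¬ G'.Adj a b) → s.card ≤ 3 := by
      intro s hs
      have hnv : ∀ x ∈ s.image Subtype.val, ¬ G.Adj v x ∧ x ≠ v := by
        intro x hx
        obtain ⟨a, ha, rfl⟩ := Finset.mem_image.mp hx
        have haM : (a : V) ∈ M := hM'M a.2
        have := Finset.mem_sdiff.mp haM
        constructor
        · intro hadj
          exact this.2 (Finset.mem_insert_of_mem (by rw [SimpleGraph.mem_neighborFinset]; exact hadj))
        · intro heq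
          exact this.2 (heq ▸ Finset.mem_insert_self _ _)
      have hT : (insert v (s.image Subtype.val)).card ≤ 4 := by
        apply hindep
        intro a ha b hb hadj
        simp only [Finset.mem_insert] at ha hb
        rcases ha with rfl | ha <;> rcases hb with rfl | hb
        · exact G.irrefl hadj
        · exact (hnv b hb).1 hadj
        · exact (hnv a ha).1 hadj.symm
        · obtain ⟨a', ha', rfl⟩ := Finset.mem_image.mp ha
          obtain ⟨b', hb', rfl⟩ := Finset.mem_image.mp hb
          exact hs a' ha' b' hb' hadj
      have hvnot : v ∉ s.image Subtype.val := fun hv => (hnv v hv).2 rfl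
      rw [Finset.card_insert_of_notMem hvnot,
        Finset.card_image_of_injective _ Subtype.val_injective] at hT
      omega
    exact B9 G' hcard9 hfree' hindep'
  omega
end

section
/- Let G be a simple graph on 12 vertices that is triangle-free (contains no K₃) and whose independence number satisfies α(G) < 5. Then G has a vertex of degree 4. -/
open Finset
set_option linter.unusedSectionVars false
set_option linter.unusedVariables false
set_option maxHeartbeats 1000000

section Helpers
variable {V : Type*} [Fintype V] [DecidableEq V] (G : SimpleGraph V) [DecidableRel G.Adj]


lemma myNoTri (hfree : G.CliqueFree 3) (a b c : V) (hab : G.Adj a b) (hac : G.Adj a c) :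
    ¬ G.Adj b c := fun hbc =>
  hfree {a, b, c} (SimpleGraph.is3Clique_triple_iff.mpr ⟨hab, hac, hbc⟩)

lemma myIndepNbrs (hfree : G.CliqueFree 3) (u : V) (s : Finset V) (hs : ∀ x ∈ s, G.Adj u x) :
    ∀ x ∈ s, ∀ y ∈ s, ¬ G.Adj x y := fun x hx y hy =>
  myNoTri G hfree u x y (hs x hx) (hs y hy)

lemma myIndepInsert {s : Finset V} (h : ∀ x ∈ s, ∀ y ∈ s, ¬ G.Adj x y)
    (x : V) (hx : ∀ y ∈ s, ¬ G.Adj x y) :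
    ∀ a ∈ insert x s, ∀ b ∈ insert x s, ¬ G.Adj a b := by
  intro a ha b hb
  rcases mem_insert.1 ha with h1 | h1 <;> rcases mem_insert.1 hb with h2 | h2
  · subst h1; subst h2; exact G.loopless.irrefl _
  · subst h1; exact hx b h2
  · subst h2; exact fun hadj => hx a h1 (G.adj_symm hadj)
  · exact h a h1 b h2

lemma myPairNonadj (hfree : G.CliqueFree 3) (a b c : V) :
    ∃ x y, ((x = a ∧ y = b) ∨ (x = a ∧ y = c) ∨ (x = b ∧ y = c)) ∧ ¬ G.Adj x y := by
  by_cases h1 : G.Adj a b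
  · by_cases h2 : G.Adj a c
    · exact ⟨b, c, Or.inr (Or.inr ⟨rfl, rfl⟩), myNoTri G hfree a b c h1 h2⟩
    · exact ⟨a, c, Or.inr (Or.inl ⟨rfl, rfl⟩), h2⟩
  · exact ⟨a, b, Or.inl ⟨rfl, rfl⟩, h1⟩

lemma myInd3 (hfree : G.CliqueFree 3) (T : Finset V) (hT : 6 ≤ T.card) :
    ∃ s ⊆ T, s.card = 3 ∧ ∀ x ∈ s, ∀ y ∈ s, ¬ G.Adj x y := by
  have hne : T.Nonempty := card_pos.1 (by omega)
  obtain ⟨v, hv⟩ := hne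
  by_cases h3 : 3 ≤ (T.filter (G.Adj v)).card
  · obtain ⟨s, hs, hcard⟩ := Finset.exists_subset_card_eq h3
    exact ⟨s, hs.trans (filter_subset _ _), hcard,
      myIndepNbrs G hfree v s (fun x hx => (mem_filter.1 (hs hx)).2)⟩
  · have hcard' : 3 ≤ ((T.erase v).filter (fun x => ¬ G.Adj v x)).card := by
      have h1 : ((T.erase v).filter (G.Adj v)).card
          + ((T.erase v).filter (fun x => ¬ G.Adj v x)).card = (T.erase v).card :=
        Finset.card_filter_add_card_filter_not _
      have h2 : ((T.erase v).filter (G.Adj v)).card ≤ (T.filter (G.Adj v)).card :=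
        card_le_card (filter_subset_filter _ (erase_subset _ _))
      have h4 : (T.erase v).card = T.card - 1 := card_erase_of_mem hv
      omega
    obtain ⟨s, hs, hcard3⟩ := Finset.exists_subset_card_eq hcard'
    obtain ⟨a, b, c, hab, hac, hbc, rfl⟩ := Finset.card_eq_three.1 hcard3
    have hmem : ∀ x ∈ ({a,b,c} : Finset V), x ∈ T ∧ x ≠ v ∧ ¬ G.Adj v x := by
      intro x hx
      have := hs hx
      rw [mem_filter, mem_erase] at this
      exact ⟨this.1.2, this.1.1, this.2⟩
    obtain ⟨ha, hav, havn⟩ := hmem a (by simp)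
    obtain ⟨hb, hbv, hbvn⟩ := hmem b (by simp)
    obtain ⟨hc, hcv, hcvn⟩ := hmem c (by simp)
    obtain ⟨x, y, hxy, hnadj⟩ := myPairNonadj G hfree a b c
    have hx : x ∈ T ∧ x ≠ v ∧ ¬ G.Adj v x := by
      rcases hxy with ⟨rfl,rfl⟩|⟨rfl,rfl⟩|⟨rfl,rfl⟩ <;>
        exact ⟨by assumption, by assumption, by assumption⟩
    have hy : y ∈ T ∧ y ≠ v ∧ ¬ G.Adj v y := by
      rcases hxy with ⟨rfl,rfl⟩|⟨rfl,rfl⟩|⟨rfl,rfl⟩ <;>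
        exact ⟨by assumption, by assumption, by assumption⟩
    have hxyne : x ≠ y := by
      rcases hxy with ⟨rfl,rfl⟩|⟨rfl,rfl⟩|⟨rfl,rfl⟩ <;> assumption
    refine ⟨{v, x, y}, ?_, ?_, ?_⟩
    · intro z hz; rcases mem_insert.1 hz with rfl|hz'; · exact hv
      rcases mem_insert.1 hz' with rfl|hz''; · exact hx.1
      rw [mem_singleton] at hz''; subst hz''; exact hy.1
    · rw [card_insert_of_notMem (by
          simp only [mem_insert, mem_singleton]; push_neg
          exact ⟨fun h => hx.2.1 h.symm, fun h => hy.2.1 h.symm⟩),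
        card_insert_of_notMem (by simp [hxyne]), card_singleton]
    · have h1 : ∀ z ∈ ({x, y} : Finset V), ∀ w ∈ ({x,y} : Finset V), ¬ G.Adj z w := by
        intro z hz w hw
        rcases mem_insert.1 hz with h1|h1 <;> [skip; rw [mem_singleton] at h1] <;> subst h1 <;>
          (rcases mem_insert.1 hw with h2|h2 <;> [skip; rw [mem_singleton] at h2] <;> subst h2)
        · exact G.loopless.irrefl _
        · exact hnadj
        · exact fun h => hnadj (G.adj_symm h)
        · exact G.loopless.irrefl _
      exact myIndepInsert G h1 v (by
        intro w hw
        rcases mem_insert.1 hw with h2|h2 <;> [skip; rw [mem_singleton] at h2] <;> subst h2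
        · exact hx.2.2
        · exact hy.2.2)

lemma myEvenHandshake (T : Finset V) : Even (∑ u ∈ T, (T.filter (G.Adj u)).card) := by
  classical
  induction T using Finset.induction_on with
  | empty => simp
  | @insert a s ha ih =>
    rw [Finset.sum_insert ha]
    have key : ∀ u : V, ((insert a s).filter (G.Adj u)).card
        = (s.filter (G.Adj u)).card + (if G.Adj u a then 1 else 0) := by
      intro u
      rw [filter_insert]
      by_cases h : G.Adj u a
      · rw [if_pos h, card_insert_of_notMem (fun hc => ha (filter_subset _ _ hc)), if_pos h]
      · rw [if_neg h, if_neg h, add_zero]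
    have h2 : ∑ u ∈ s, ((insert a s).filter (G.Adj u)).card
        = (∑ u ∈ s, (s.filter (G.Adj u)).card) + (s.filter (fun u => G.Adj u a)).card := by
      rw [Finset.sum_congr rfl (fun u _ => key u), Finset.sum_add_distrib]
      congr 1
      rw [Finset.card_filter]
    have h3 : ((insert a s).filter (G.Adj a)).card = (s.filter (G.Adj a)).card := by
      rw [key, if_neg (G.loopless.irrefl a), add_zero]
    have h4 : (s.filter (fun u => G.Adj u a)).card = (s.filter (G.Adj a)).card := by
      congr 1; apply filter_congr; intro x _; simp [G.adj_comm]
    rw [h2, h3, h4]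
    obtain ⟨k, hk⟩ := ih
    exact ⟨(s.filter (G.Adj a)).card + k, by omega⟩

lemma myInd4 (hfree : G.CliqueFree 3) (T : Finset V) (hT : 9 ≤ T.card) :
    ∃ s ⊆ T, s.card = 4 ∧ ∀ x ∈ s, ∀ y ∈ s, ¬ G.Adj x y := by
  obtain ⟨T', hT'sub, hT'card⟩ := Finset.exists_subset_card_eq hT
  by_contra hno
  push_neg at hno
  have hdeg : ∀ u ∈ T', (T'.filter (G.Adj u)).card = 3 := by
    intro u hu
    by_cases h4 : 4 ≤ (T'.filter (G.Adj u)).card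
    · exfalso
      obtain ⟨s, hs, hcard⟩ := Finset.exists_subset_card_eq h4
      obtain ⟨x, hx, y, hy, hadj⟩ :=
        hno s ((hs.trans (filter_subset _ _)).trans hT'sub) hcard
      exact myIndepNbrs G hfree u s (fun x hx => (mem_filter.1 (hs hx)).2) x hx y hy hadj
    · by_cases h2 : (T'.filter (G.Adj u)).card ≤ 2
      · exfalso
        have hcard' : 6 ≤ ((T'.erase u).filter (fun x => ¬ G.Adj u x)).card := by
          have h1 : ((T'.erase u).filter (G.Adj u)).card
              + ((T'.erase u).filter (fun x => ¬ G.Adj u x)).card = (T'.erase u).card :=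
            Finset.card_filter_add_card_filter_not _
          have h2' : ((T'.erase u).filter (G.Adj u)).card ≤ (T'.filter (G.Adj u)).card :=
            card_le_card (filter_subset_filter _ (erase_subset _ _))
          have h4' : (T'.erase u).card = T'.card - 1 := card_erase_of_mem hu
          omega
        obtain ⟨s, hs, hcard3, hsind⟩ := myInd3 G hfree _ hcard'
        have hsmem : ∀ x ∈ s, x ∈ T' ∧ x ≠ u ∧ ¬ G.Adj u x := by
          intro x hx
          have := hs hx
          rw [mem_filter, mem_erase] at this
          exact ⟨this.1.2, this.1.1, this.2⟩
        have husn : u ∉ s := fun hc => (hsmem u hc).2.1 rfl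
        obtain ⟨x, hx, y, hy, hadj⟩ := hno (insert u s)
          (by
            intro z hz; rcases mem_insert.1 hz with rfl|hz'
            · exact hT'sub hu
            · exact hT'sub (hsmem z hz').1)
          (by rw [card_insert_of_notMem husn, hcard3])
        exact myIndepInsert G hsind u (fun y hy => (hsmem y hy).2.2) x hx y hy hadj
      · omega
  have heven := myEvenHandshake G T'
  rw [Finset.sum_congr rfl hdeg, Finset.sum_const, hT'card] at heven
  obtain ⟨k, hk⟩ := heven
  rw [smul_eq_mul] at hk
  omega

lemma mySumComm (s t : Finset V) :
    ∑ a ∈ s, (t.filter (G.Adj a)).card = ∑ b ∈ t, (s.filter (G.Adj b)).card := by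
  simp only [Finset.card_filter]
  rw [Finset.sum_comm]
  exact Finset.sum_congr rfl fun b _ => Finset.sum_congr rfl fun a _ => if_congr (G.adj_comm a b) rfl rfl

end Helpers

/-- A triangle-free simple graph on 12 vertices whose independence number is
less than 5 (every independent set has at most 4 vertices) has a vertex of
degree 4. -/
theorem stmt_13 {V : Type*} [Fintype V] [DecidableEq V]
    (G : SimpleGraph V) [DecidableRel G.Adj]
    (hV : Fintype.card V = 12) (hfree : G.CliqueFree 3)
    (hindep : ∀ s : Finset V, (∀ v ∈ s, ∀ w ∈ s, ¬ G.Adj v w) → s.card ≤ 4) :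
    ∃ v : V, G.degree v = 4 := by
  by_contra hcon
  push_neg at hcon
  have hnbr : ∀ x : V, G.neighborFinset x = univ.filter (G.Adj x) := by
    intro x; ext y; simp [SimpleGraph.mem_neighborFinset]
  have hdegnbr : ∀ x : V, G.degree x = (G.neighborFinset x).card := fun _ => rfl
  -- 5-element independent set contradiction helper
  have h5 : ∀ a b c d e : V, a≠b → a≠c → a≠d → a≠e → b≠c → b≠d → b≠e → c≠d → c≠e → d≠e →
      ¬G.Adj a b → ¬G.Adj a c → ¬G.Adj a d → ¬G.Adj a e → ¬G.Adj b c → ¬G.Adj b d →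
      ¬G.Adj b e → ¬G.Adj c d → ¬G.Adj c e → ¬G.Adj d e → False := by
    intro a b c d e n1 n2 n3 n4 n5 n6 n7 n8 n9 n10 hab hac had hae hbc hbd hbe hcd hce hde
    have hba : ¬G.Adj b a := fun h => hab (G.adj_symm h)
    have hca : ¬G.Adj c a := fun h => hac (G.adj_symm h)
    have hda : ¬G.Adj d a := fun h => had (G.adj_symm h)
    have hea : ¬G.Adj e a := fun h => hae (G.adj_symm h)
    have hcb : ¬G.Adj c b := fun h => hbc (G.adj_symm h)
    have hdb : ¬G.Adj d b := fun h => hbd (G.adj_symm h)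
    have heb : ¬G.Adj e b := fun h => hbe (G.adj_symm h)
    have hdc : ¬G.Adj d c := fun h => hcd (G.adj_symm h)
    have hec : ¬G.Adj e c := fun h => hce (G.adj_symm h)
    have hed : ¬G.Adj e d := fun h => hde (G.adj_symm h)
    have hind := hindep {a,b,c,d,e} (by
      intro x hx y hy
      simp only [mem_insert, mem_singleton] at hx hy
      rcases hx with rfl|rfl|rfl|rfl|rfl <;> rcases hy with rfl|rfl|rfl|rfl|rfl <;>
        first | exact G.loopless.irrefl _ | assumption)
    have hcard : ({a,b,c,d,e} : Finset V).card = 5 := by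
      rw [card_insert_of_notMem (by
            simp only [mem_insert, mem_singleton]; push_neg; exact ⟨n1,n2,n3,n4⟩),
        card_insert_of_notMem (by
            simp only [mem_insert, mem_singleton]; push_neg; exact ⟨n5,n6,n7⟩),
        card_insert_of_notMem (by
            simp only [mem_insert, mem_singleton]; push_neg; exact ⟨n8,n9⟩),
        card_insert_of_notMem (by simp only [mem_singleton]; exact n10),
        card_singleton]
    omega
  -- degrees ≤ 4
  have hdegle : ∀ x : V, G.degree x ≤ 4 := by
    intro x
    rw [hdegnbr]
    exact hindep _ (myIndepNbrs G hfree x _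
      (fun y hy => (SimpleGraph.mem_neighborFinset G x y).1 hy))
  -- degrees ≥ 3
  have hdegge : ∀ x : V, 3 ≤ G.degree x := by
    intro x
    by_contra hlt
    push_neg at hlt
    have hTcard : 9 ≤ (univ \ insert x (G.neighborFinset x)).card := by
      rw [card_sdiff_of_subset (subset_univ _), card_univ, hV]
      have h1 := card_insert_le x (G.neighborFinset x)
      have h2 : (G.neighborFinset x).card ≤ 2 := by rw [← hdegnbr]; omega
      omega
    obtain ⟨s, hs, hc4, hind⟩ := myInd4 G hfree _ hTcard
    have hmem : ∀ y ∈ s, y ≠ x ∧ ¬ G.Adj x y := by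
      intro y hy
      have := hs hy
      rw [mem_sdiff, mem_insert] at this
      push_neg at this
      exact ⟨this.2.1, fun h => this.2.2 ((SimpleGraph.mem_neighborFinset G x y).2 h)⟩
    have hxs : x ∉ s := fun hc => (hmem x hc).1 rfl
    have := hindep (insert x s) (myIndepInsert G hind x (fun y hy => (hmem y hy).2))
    rw [card_insert_of_notMem hxs, hc4] at this
    omega
  have hdeg3 : ∀ x : V, G.degree x = 3 := by
    intro x; have := hdegle x; have := hdegge x; have := hcon x; omega
  -- pick arbitrary vertex v
  have : Nonempty V := Fintype.card_pos_iff.1 (by omega)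
  obtain ⟨v⟩ := this
  set N := G.neighborFinset v with hN
  have hNcard : N.card = 3 := by rw [hN, ← hdegnbr, hdeg3]
  set M := univ \ insert v N with hM
  have hvN : v ∉ N := by rw [hN]; simp
  have hMcard : M.card = 8 := by
    rw [hM, card_sdiff_of_subset (subset_univ _), card_univ, hV, card_insert_of_notMem hvN, hNcard]
  have hMmem : ∀ x, x ∈ M ↔ x ≠ v ∧ ¬ G.Adj v x := by
    intro x
    rw [hM, mem_sdiff, mem_insert, hN]
    simp only [mem_univ, true_and, not_or, SimpleGraph.mem_neighborFinset]
  have hNmem : ∀ x, x ∈ N ↔ G.Adj v x := by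
    intro x; rw [hN]; exact SimpleGraph.mem_neighborFinset G v x
  -- degree split
  have hsplit : ∀ x : V, (M.filter (G.Adj x)).card + ((insert v N).filter (G.Adj x)).card = 3 := by
    intro x
    have hu : M ∪ insert v N = univ := sdiff_union_of_subset (subset_univ _)
    have hdisj : Disjoint (M.filter (G.Adj x)) ((insert v N).filter (G.Adj x)) :=
      (sdiff_disjoint).mono (filter_subset _ _) (filter_subset _ _)
    rw [← card_union_of_disjoint hdisj, ← filter_union, hu, ← hnbr, ← hdegnbr, hdeg3]
  have hsplitM : ∀ x ∈ M, (M.filter (G.Adj x)).card + (N.filter (G.Adj x)).card = 3 := by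
    intro x hx
    have h1 := hsplit x
    have h2 : ¬ G.Adj x v := fun h => ((hMmem x).1 hx).2 (G.adj_symm h)
    rwa [filter_insert, if_neg h2] at h1
  have hsplitN : ∀ a ∈ N, (M.filter (G.Adj a)).card = 2 := by
    intro a ha
    have h1 := hsplit a
    have hav : G.Adj a v := G.adj_symm ((hNmem a).1 ha)
    have hNf : N.filter (G.Adj a) = ∅ := by
      rw [eq_empty_iff_forall_notMem]
      intro b hb
      rw [mem_filter, hNmem] at hb
      exact myNoTri G hfree v a b ((hNmem a).1 ha) hb.1 hb.2
    rw [filter_insert, if_pos hav, hNf, insert_empty_eq, card_singleton] at h1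
    omega
  -- every vertex of M has at least 2 neighbors inside M
  have hdM2 : ∀ u ∈ M, 2 ≤ (M.filter (G.Adj u)).card := by
    intro u hu
    by_contra hlt
    push_neg at hlt
    have hRcard : 6 ≤ ((M.erase u).filter (fun x => ¬ G.Adj u x)).card := by
      have h1 : ((M.erase u).filter (G.Adj u)).card
          + ((M.erase u).filter (fun x => ¬ G.Adj u x)).card = (M.erase u).card :=
        Finset.card_filter_add_card_filter_not _
      have h2 : ((M.erase u).filter (G.Adj u)).card ≤ (M.filter (G.Adj u)).card :=
        card_le_card (filter_subset_filter _ (erase_subset _ _))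
      have h3 : (M.erase u).card = M.card - 1 := card_erase_of_mem hu
      omega
    obtain ⟨s, hs, hc3, hind⟩ := myInd3 G hfree _ hRcard
    have hmem : ∀ y ∈ s, y ∈ M ∧ y ≠ u ∧ ¬ G.Adj u y := by
      intro y hy
      have := hs hy
      rw [mem_filter, mem_erase] at this
      exact ⟨this.1.2, this.1.1, this.2⟩
    have hus : u ∉ s := fun hc => (hmem u hc).2.1 rfl
    have hindus : ∀ a ∈ insert u s, ∀ b ∈ insert u s, ¬ G.Adj a b :=
      myIndepInsert G hind u (fun y hy => (hmem y hy).2.2)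
    have hvus : ∀ y ∈ insert u s, ¬ G.Adj v y := by
      intro y hy
      rcases mem_insert.1 hy with rfl|hy'
      · exact ((hMmem y).1 hu).2
      · exact ((hMmem y).1 (hmem y hy').1).2
    have hvnot : v ∉ insert u s := by
      intro hc
      rcases mem_insert.1 hc with h|h
      · exact ((hMmem u).1 hu).1 h.symm
      · exact ((hMmem v).1 (hmem v h).1).1 rfl
    have := hindep (insert v (insert u s)) (myIndepInsert G hindus v hvus)
    rw [card_insert_of_notMem hvnot, card_insert_of_notMem hus, hc3] at this
    omega
  -- find u in M with exactly 2 neighbors in M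
  have hNne : N.Nonempty := card_pos.1 (by omega)
  obtain ⟨a0, ha0⟩ := hNne
  have h2a0 := hsplitN a0 ha0
  have hMfne : (M.filter (G.Adj a0)).Nonempty := card_pos.1 (by omega)
  obtain ⟨u, hu'⟩ := hMfne
  rw [mem_filter] at hu'
  obtain ⟨huM, ha0u⟩ := hu'
  have hNu1 : 1 ≤ (N.filter (G.Adj u)).card := by
    refine card_pos.2 ⟨a0, ?_⟩
    rw [mem_filter]
    exact ⟨ha0, G.adj_symm ha0u⟩
  have huM2 : (M.filter (G.Adj u)).card = 2 := by
    have := hsplitM u huM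
    have := hdM2 u huM
    omega
  have hNucard : (N.filter (G.Adj u)).card = 1 := by
    have := hsplitM u huM
    omega
  obtain ⟨p, q, hpqne, hpq2⟩ := Finset.card_eq_two.1 huM2
  have hpM : p ∈ M ∧ G.Adj u p := by
    have : p ∈ M.filter (G.Adj u) := by rw [hpq2]; simp
    rwa [mem_filter] at this
  have hqM : q ∈ M ∧ G.Adj u q := by
    have : q ∈ M.filter (G.Adj u) := by rw [hpq2]; simp
    rwa [mem_filter] at this
  have hpqnadj : ¬ G.Adj p q := myNoTri G hfree u p q hpM.2 hqM.2
  -- the 5-set P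
  set P := (M.erase u).filter (fun x => ¬ G.Adj u x) with hP
  have hPmem : ∀ w ∈ P, w ∈ M ∧ w ≠ u ∧ ¬ G.Adj u w := by
    intro w hw
    rw [hP, mem_filter, mem_erase] at hw
    exact ⟨hw.1.2, hw.1.1, hw.2⟩
  have hPcard : P.card = 5 := by
    have h1 : ((M.erase u).filter (G.Adj u)).card + P.card = (M.erase u).card :=
      Finset.card_filter_add_card_filter_not _
    have h2 : (M.erase u).filter (G.Adj u) = M.filter (G.Adj u) := by
      rw [filter_erase, erase_eq_of_notMem]
      intro hc
      exact G.loopless.irrefl u (mem_filter.1 hc).2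
    have h3 : (M.erase u).card = M.card - 1 := card_erase_of_mem huM
    have h2c : ((M.erase u).filter (G.Adj u)).card = 2 := by rw [h2, huM2]
    omega
  have hpP : p ∉ P := fun hc => (hPmem p hc).2.2 hpM.2
  have hqP : q ∉ P := fun hc => (hPmem q hc).2.2 hqM.2
  have huP : u ∉ P := fun hc => (hPmem u hc).2.1 rfl
  have hup : u ≠ p := G.ne_of_adj hpM.2
  have huq : u ≠ q := G.ne_of_adj hqM.2
  -- decomposition of M
  have hMdecomp : M = insert u (insert p (insert q P)) := by
    ext x
    constructor
    · intro hx
      by_cases hxu : x = u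
      · simp [hxu]
      · by_cases hadj : G.Adj u x
        · have : x ∈ M.filter (G.Adj u) := mem_filter.2 ⟨hx, hadj⟩
          rw [hpq2] at this
          rcases mem_insert.1 this with h|h
          · simp [h]
          · rw [mem_singleton] at h
            simp [h]
        · have : x ∈ P := by
            rw [hP, mem_filter, mem_erase]
            exact ⟨⟨hxu, hx⟩, hadj⟩
          simp [this]
    · intro hx
      rcases mem_insert.1 hx with rfl|hx'
      · exact huM
      rcases mem_insert.1 hx' with rfl|hx''
      · exact hpM.1
      rcases mem_insert.1 hx'' with rfl|hx'''
      · exact hqM.1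
      · exact (hPmem x hx''').1
  -- each vertex of P has exactly 2 neighbors in P
  have hC5 : ∀ w ∈ P, (P.filter (G.Adj w)).card = 2 := by
    intro w hw
    obtain ⟨hwM, hwu, hunw⟩ := hPmem w hw
    by_cases h3 : 3 ≤ (P.filter (G.Adj w)).card
    · exfalso
      obtain ⟨s, hs, hc3⟩ := Finset.exists_subset_card_eq h3
      have hsP : ∀ y ∈ s, y ∈ P ∧ G.Adj w y := fun y hy => mem_filter.1 (hs hy)
      have hind := myIndepNbrs G hfree w s (fun y hy => (hsP y hy).2)
      have hus : u ∉ s := fun hc => huP (hsP u hc).1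
      have hindus := myIndepInsert G hind u (fun y hy => (hPmem y (hsP y hy).1).2.2)
      have hvadj : ∀ y ∈ insert u s, ¬ G.Adj v y := by
        intro y hy
        rcases mem_insert.1 hy with rfl|hy'
        · exact ((hMmem y).1 huM).2
        · exact ((hMmem y).1 (hPmem y (hsP y hy').1).1).2
      have hvnot : v ∉ insert u s := by
        intro hc
        rcases mem_insert.1 hc with h|h
        · exact ((hMmem u).1 huM).1 h.symm
        · exact ((hMmem v).1 (hPmem v (hsP v h).1).1).1 rfl
      have := hindep (insert v (insert u s)) (myIndepInsert G hindus v hvadj)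
      rw [card_insert_of_notMem hvnot, card_insert_of_notMem hus, hc3] at this
      omega
    · by_cases h1 : (P.filter (G.Adj w)).card ≤ 1
      · exfalso
        have hRcard : 3 ≤ ((P.erase w).filter (fun z => ¬ G.Adj w z)).card := by
          have e1 : ((P.erase w).filter (G.Adj w)).card
              + ((P.erase w).filter (fun z => ¬ G.Adj w z)).card = (P.erase w).card :=
            Finset.card_filter_add_card_filter_not _
          have e2 : ((P.erase w).filter (G.Adj w)).card ≤ (P.filter (G.Adj w)).card :=
            card_le_card (filter_subset_filter _ (erase_subset _ _))
          have e3 : (P.erase w).card = P.card - 1 := card_erase_of_mem hw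
          omega
        obtain ⟨s, hs, hc3⟩ := Finset.exists_subset_card_eq hRcard
        obtain ⟨A, B, C, hAB, hAC, hBC, rfl⟩ := Finset.card_eq_three.1 hc3
        have hmem3 : ∀ z ∈ ({A,B,C} : Finset V), z ∈ P ∧ z ≠ w ∧ ¬ G.Adj w z := by
          intro z hz
          have := hs hz
          rw [mem_filter, mem_erase] at this
          exact ⟨this.1.2, this.1.1, this.2⟩
        obtain ⟨x, y, hxy, hnadj⟩ := myPairNonadj G hfree A B C
        have hxf : x ∈ P ∧ x ≠ w ∧ ¬ G.Adj w x := by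
          rcases hxy with ⟨rfl,rfl⟩|⟨rfl,rfl⟩|⟨rfl,rfl⟩ <;> exact hmem3 _ (by simp)
        have hyf : y ∈ P ∧ y ≠ w ∧ ¬ G.Adj w y := by
          rcases hxy with ⟨rfl,rfl⟩|⟨rfl,rfl⟩|⟨rfl,rfl⟩ <;> exact hmem3 _ (by simp)
        have hxyne : x ≠ y := by
          rcases hxy with ⟨rfl,rfl⟩|⟨rfl,rfl⟩|⟨rfl,rfl⟩ <;> assumption
        have hxM := (hPmem x hxf.1).1
        have hyM := (hPmem y hyf.1).1
        exact h5 v u w x y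
          (Ne.symm ((hMmem u).1 huM).1) (Ne.symm ((hMmem w).1 hwM).1)
          (Ne.symm ((hMmem x).1 hxM).1) (Ne.symm ((hMmem y).1 hyM).1)
          (Ne.symm hwu) (Ne.symm (hPmem x hxf.1).2.1) (Ne.symm (hPmem y hyf.1).2.1)
          (Ne.symm hxf.2.1) (Ne.symm hyf.2.1) hxyne
          ((hMmem u).1 huM).2 ((hMmem w).1 hwM).2 ((hMmem x).1 hxM).2 ((hMmem y).1 hyM).2
          hunw (hPmem x hxf.1).2.2 (hPmem y hyf.1).2.2
          hxf.2.2 hyf.2.2 hnadj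
      · omega
  -- outgoing edges from P
  have hdisjpqP : Disjoint ({p,q} : Finset V) P := by
    rw [disjoint_left]
    intro z hz
    rcases mem_insert.1 hz with rfl|hz'
    · exact hpP
    · rw [mem_singleton] at hz'; subst hz'; exact hqP
  have hPout : ∀ w ∈ P,
      (N.filter (G.Adj w)).card + (({p,q} : Finset V).filter (G.Adj w)).card = 1 := by
    intro w hw
    obtain ⟨hwM, hwu, hunw⟩ := hPmem w hw
    have h1 := hsplitM w hwM
    have hins : insert p (insert q P) = ({p,q} : Finset V) ∪ P := by
      rw [insert_union]; rfl
    have hMf : (M.filter (G.Adj w)).card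
        = (({p,q} : Finset V).filter (G.Adj w)).card + (P.filter (G.Adj w)).card := by
      rw [hMdecomp, filter_insert, if_neg (fun h => hunw (G.adj_symm h)), hins, filter_union,
        card_union_of_disjoint (hdisjpqP.mono (filter_subset _ _) (filter_subset _ _))]
    rw [hMf, hC5 w hw] at h1
    omega
  -- global counting
  have hsum6 : ∑ x ∈ N, (M.filter (G.Adj x)).card = 6 := by
    rw [Finset.sum_congr rfl hsplitN, Finset.sum_const, hNcard]
    rfl
  have hswap := mySumComm G N M
  have hunotin : u ∉ insert p (insert q P) := by
    simp only [mem_insert, not_or]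
    exact ⟨hup, huq, huP⟩
  have hpnotin : p ∉ insert q P := by
    simp only [mem_insert, not_or]
    exact ⟨hpqne, hpP⟩
  have hMsum : ∑ b ∈ M, (N.filter (G.Adj b)).card
      = (N.filter (G.Adj u)).card + ((N.filter (G.Adj p)).card
        + ((N.filter (G.Adj q)).card + ∑ w ∈ P, (N.filter (G.Adj w)).card)) := by
    rw [hMdecomp, Finset.sum_insert hunotin, Finset.sum_insert hpnotin, Finset.sum_insert hqP]
  have hPsum : (∑ w ∈ P, (N.filter (G.Adj w)).card)
      + ∑ w ∈ P, (({p,q} : Finset V).filter (G.Adj w)).card = 5 := by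
    rw [← Finset.sum_add_distrib, Finset.sum_congr rfl hPout, Finset.sum_const, hPcard]
    rfl
  have hpqsum : ∑ w ∈ P, (({p,q} : Finset V).filter (G.Adj w)).card
      = (P.filter (G.Adj p)).card + (P.filter (G.Adj q)).card := by
    rw [← mySumComm G, Finset.sum_insert (notMem_singleton.2 hpqne), Finset.sum_singleton]
  have hMp : (M.filter (G.Adj p)).card = 1 + (P.filter (G.Adj p)).card := by
    have he : M.filter (G.Adj p) = insert u (P.filter (G.Adj p)) := by
      rw [hMdecomp, filter_insert, if_pos (G.adj_symm hpM.2), filter_insert,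
        if_neg (G.loopless.irrefl p), filter_insert, if_neg hpqnadj]
    rw [he, card_insert_of_notMem (fun hc => huP (filter_subset _ _ hc))]
    omega
  have hMq : (M.filter (G.Adj q)).card = 1 + (P.filter (G.Adj q)).card := by
    have he : M.filter (G.Adj q) = insert u (P.filter (G.Adj q)) := by
      rw [hMdecomp, filter_insert, if_pos (G.adj_symm hqM.2), filter_insert,
        if_neg (fun h => hpqnadj (G.adj_symm h)), filter_insert, if_neg (G.loopless.irrefl q)]
    rw [he, card_insert_of_notMem (fun hc => huP (filter_subset _ _ hc))]
    omega
  have hp1 := hsplitM p hpM.1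
  have hq1 := hsplitM q hqM.1
  have hap := hdM2 p hpM.1
  have haq := hdM2 q hqM.1
  have hApcard : (P.filter (G.Adj p)).card = 1 := by omega
  have hAqcard : (P.filter (G.Adj q)).card = 1 := by omega
  obtain ⟨wp, hwp⟩ := Finset.card_eq_one.1 hApcard
  obtain ⟨wq, hwq⟩ := Finset.card_eq_one.1 hAqcard
  have hwpP : wp ∈ P ∧ G.Adj p wp := by
    have : wp ∈ P.filter (G.Adj p) := by rw [hwp]; simp
    exact mem_filter.1 this
  have hwqP : wq ∈ P ∧ G.Adj q wq := by
    have : wq ∈ P.filter (G.Adj q) := by rw [hwq]; simp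
    exact mem_filter.1 this
  have hwpq : wp ≠ wq := by
    intro he
    have hqwp : G.Adj q wp := by rw [he]; exact hwqP.2
    have hsub : insert p (insert q (P.filter (G.Adj wp))) ⊆ M.filter (G.Adj wp) := by
      intro z hz
      rcases mem_insert.1 hz with rfl|hz'
      · exact mem_filter.2 ⟨hpM.1, G.adj_symm hwpP.2⟩
      rcases mem_insert.1 hz' with rfl|hz''
      · exact mem_filter.2 ⟨hqM.1, G.adj_symm hqwp⟩
      · have := mem_filter.1 hz''
        exact mem_filter.2 ⟨(hPmem z this.1).1, this.2⟩
    have hqnot : q ∉ P.filter (G.Adj wp) := fun hc => hqP (filter_subset _ _ hc)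
    have hpnot : p ∉ insert q (P.filter (G.Adj wp)) := by
      simp only [mem_insert, not_or]
      exact ⟨hpqne, fun hc => hpP (filter_subset _ _ hc)⟩
    have hcard4 : (insert p (insert q (P.filter (G.Adj wp)))).card = 4 := by
      rw [card_insert_of_notMem hpnot, card_insert_of_notMem hqnot, hC5 wp hwpP.1]
    have hle := card_le_card hsub
    have := hsplitM wp (hPmem wp hwpP.1).1
    omega
  -- pick two nonadjacent vertices in P minus wp, wq
  have hwqmem : wq ∈ P.erase wp := mem_erase.2 ⟨Ne.symm hwpq, hwqP.1⟩
  have hP'card : ((P.erase wp).erase wq).card = 3 := by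
    rw [card_erase_of_mem hwqmem, card_erase_of_mem hwpP.1, hPcard]
  obtain ⟨A, B, C, hAB, hAC, hBC, hset⟩ := Finset.card_eq_three.1 hP'card
  have hmem3 : ∀ z ∈ ({A,B,C} : Finset V), z ∈ P ∧ z ≠ wp ∧ z ≠ wq := by
    intro z hz
    rw [← hset, mem_erase, mem_erase] at hz
    exact ⟨hz.2.2, hz.2.1, hz.1⟩
  obtain ⟨x, y, hxy, hnadj⟩ := myPairNonadj G hfree A B C
  have hxf : x ∈ P ∧ x ≠ wp ∧ x ≠ wq := by
    rcases hxy with ⟨rfl,rfl⟩|⟨rfl,rfl⟩|⟨rfl,rfl⟩ <;> exact hmem3 _ (by simp)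
  have hyf : y ∈ P ∧ y ≠ wp ∧ y ≠ wq := by
    rcases hxy with ⟨rfl,rfl⟩|⟨rfl,rfl⟩|⟨rfl,rfl⟩ <;> exact hmem3 _ (by simp)
  have hxyne : x ≠ y := by
    rcases hxy with ⟨rfl,rfl⟩|⟨rfl,rfl⟩|⟨rfl,rfl⟩ <;> assumption
  have hxM := (hPmem x hxf.1).1
  have hyM := (hPmem y hyf.1).1
  have hpx : ¬ G.Adj p x := by
    intro h
    have : x ∈ P.filter (G.Adj p) := mem_filter.2 ⟨hxf.1, h⟩
    rw [hwp, mem_singleton] at this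
    exact hxf.2.1 this
  have hpy : ¬ G.Adj p y := by
    intro h
    have : y ∈ P.filter (G.Adj p) := mem_filter.2 ⟨hyf.1, h⟩
    rw [hwp, mem_singleton] at this
    exact hyf.2.1 this
  have hqx : ¬ G.Adj q x := by
    intro h
    have : x ∈ P.filter (G.Adj q) := mem_filter.2 ⟨hxf.1, h⟩
    rw [hwq, mem_singleton] at this
    exact hxf.2.2 this
  have hqy : ¬ G.Adj q y := by
    intro h
    have : y ∈ P.filter (G.Adj q) := mem_filter.2 ⟨hyf.1, h⟩
    rw [hwq, mem_singleton] at this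
    exact hyf.2.2 this
  exact h5 v p q x y
    (Ne.symm ((hMmem p).1 hpM.1).1) (Ne.symm ((hMmem q).1 hqM.1).1)
    (Ne.symm ((hMmem x).1 hxM).1) (Ne.symm ((hMmem y).1 hyM).1)
    hpqne (fun h => hpP (h ▸ hxf.1)) (fun h => hpP (h ▸ hyf.1))
    (fun h => hqP (h ▸ hxf.1)) (fun h => hqP (h ▸ hyf.1)) hxyne
    ((hMmem p).1 hpM.1).2 ((hMmem q).1 hqM.1).2 ((hMmem x).1 hxM).2 ((hMmem y).1 hyM).2
    hpqnadj hpx hpy hqx hqy hnadj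
end

section
/- Let d ≥ 3 and let V = {v₀, v₁, …, v_d} ⊆ ℝ^d be the vertex set of a regular simplex with all pairwise distances equal to 1. Let M be the set of all midpoints (v_i + v_j)/2 of pairs of distinct vertices v_i, v_j ∈ V. Then |M| = (d+1)d/2 and M is a two-distance set: the set of distances between pairs of distinct points of M is exactly {1/2, 1/√2}. In particular, the largest cardinality of a two-distance set in ℝ^d is at least (d+1 choose 2). -/
open scoped RealInnerProductSpace

section aux

variable {d : ℕ} (v : Fin (d + 1) → EuclideanSpace ℝ (Fin d))
  (hv : ∀ i j, i ≠ j → dist (v i) (v j) = 1)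

include hv

lemma simplex_inner (i j k : Fin (d+1)) (hik : i ≠ k) (hjk : j ≠ k) (hij : i ≠ j) :
    ⟪v i - v k, v j - v k⟫ = 1 / 2 := by
  have h1 : ‖v i - v k‖ = 1 := by rw [← dist_eq_norm]; exact hv i k hik
  have h2 : ‖v j - v k‖ = 1 := by rw [← dist_eq_norm]; exact hv j k hjk
  have h3 : ‖(v i - v k) - (v j - v k)‖ = 1 := by
    rw [sub_sub_sub_cancel_right, ← dist_eq_norm]; exact hv i j hij
  have := norm_sub_sq_real (v i - v k) (v j - v k)
  rw [h1, h2, h3] at this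
  nlinarith

lemma simplex_mid_share (i j k : Fin (d+1)) (hij : i ≠ j) (hik : i ≠ k) (hjk : j ≠ k) :
    dist (midpoint ℝ (v i) (v j)) (midpoint ℝ (v i) (v k)) = 1 / 2 := by
  rw [dist_eq_norm, midpoint_eq_smul_add, midpoint_eq_smul_add, ← smul_sub]
  have : v i + v j - (v i + v k) = v j - v k := by abel
  rw [this, norm_smul]
  have : ‖v j - v k‖ = 1 := by rw [← dist_eq_norm]; exact hv j k hjk
  rw [this]
  norm_num

lemma simplex_mid_disj (i j k l : Fin (d+1)) (hik : i ≠ k) (hil : i ≠ l)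
    (hjk : j ≠ k) (hjl : j ≠ l) (hij : i ≠ j) (hkl : k ≠ l) :
    dist (midpoint ℝ (v i) (v j)) (midpoint ℝ (v k) (v l)) = (Real.sqrt 2)⁻¹ := by
  rw [dist_eq_norm, midpoint_eq_smul_add, midpoint_eq_smul_add, ← smul_sub]
  have hre : v i + v j - (v k + v l) = (v i - v k) + (v j - v l) := by abel
  rw [hre, norm_smul]
  have hinner : ⟪v i - v k, v j - v l⟫ = 0 := by
    have h1 : ⟪v i - v k, v j - v k⟫ = 1/2 := simplex_inner v hv i j k hik hjk hij
    have h2 : ⟪v i - v k, v l - v k⟫ = 1/2 := simplex_inner v hv i l k hik hkl.symm hil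
    have : v j - v l = (v j - v k) - (v l - v k) := by abel
    rw [this, inner_sub_right, h1, h2]
    ring
  have hn1 : ‖v i - v k‖ = 1 := by rw [← dist_eq_norm]; exact hv i k hik
  have hn2 : ‖v j - v l‖ = 1 := by rw [← dist_eq_norm]; exact hv j l hjl
  have hsq : ‖(v i - v k) + (v j - v l)‖ ^ 2 = 2 := by
    rw [norm_add_sq_real, hn1, hn2, hinner]; ring
  have hnn : ‖(v i - v k) + (v j - v l)‖ = Real.sqrt 2 := by
    rw [← Real.sqrt_sq (norm_nonneg _), hsq]
  rw [hnn]
  have h2 : Real.sqrt 2 > 0 := by positivity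
  rw [show ‖(⅟2 : ℝ)‖ = 1/2 by norm_num]
  rw [eq_comm, inv_eq_iff_eq_inv, eq_comm, inv_eq_one_div]
  rw [div_eq_iff (by positivity)]
  nlinarith [Real.sq_sqrt (by norm_num : (0:ℝ) ≤ 2)]

lemma simplex_mid_key (i j k l : Fin (d+1)) (hij : i ≠ j) (hkl : k ≠ l)
    (hne : (Sym2.mk i j) ≠ Sym2.mk k l) :
    dist (midpoint ℝ (v i) (v j)) (midpoint ℝ (v k) (v l)) = 1 / 2 ∨
    dist (midpoint ℝ (v i) (v j)) (midpoint ℝ (v k) (v l)) = (Real.sqrt 2)⁻¹ := by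
  rw [Ne, Sym2.mk_eq_mk_iff (p := (i, j)) (q := (k, l))] at hne
  push_neg at hne
  obtain ⟨h1, h2⟩ := hne
  simp only [Prod.mk.injEq, Prod.swap_prod_mk] at h1 h2
  by_cases hik : i = k
  · subst hik
    have hjl : j ≠ l := by tauto
    exact Or.inl (simplex_mid_share v hv i j l hij (by tauto) hjl)
  · by_cases hil : i = l
    · subst hil
      have hjk : j ≠ k := by tauto
      rw [midpoint_comm (v k) (v i)]
      exact Or.inl (simplex_mid_share v hv i j k hij (Ne.symm hkl) hjk)
    · by_cases hjk : j = k
      · subst hjk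
        rw [midpoint_comm (v i) (v j)]
        have hil' : i ≠ l := hil
        exact Or.inl (simplex_mid_share v hv j i l (Ne.symm hij) hkl hil')
      · by_cases hjl : j = l
        · subst hjl
          rw [midpoint_comm (v i) (v j), midpoint_comm (v k) (v j)]
          exact Or.inl (simplex_mid_share v hv j i k (Ne.symm hij) (Ne.symm hkl) hik)
        · exact Or.inr (simplex_mid_disj v hv i j k l hik hil hjk hjl hij hkl)

lemma simplex_mid_ne (i j k l : Fin (d+1)) (hij : i ≠ j) (hkl : k ≠ l)
    (hne : (Sym2.mk i j) ≠ Sym2.mk k l) :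
    midpoint ℝ (v i) (v j) ≠ midpoint ℝ (v k) (v l) := by
  intro h
  have h0 : dist (midpoint ℝ (v i) (v j)) (midpoint ℝ (v k) (v l)) = 0 := by
    rw [h, dist_self]
  rcases simplex_mid_key v hv i j k l hij hkl hne with h' | h'
  · rw [h0] at h'; norm_num at h'
  · rw [h0] at h'
    have h2 : (0:ℝ) < (Real.sqrt 2)⁻¹ := by positivity
    exact absurd h'.symm (ne_of_gt h2)

end aux

/-- Let `v₀, …, v_d` (`d ≥ 3`) be the vertices of a regular simplex in `ℝ^d`
with all pairwise distances `1`, and let `M` be the set of midpoints of pairs of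
distinct vertices.  Then `|M| = (d+1)d/2`, the set of distances between distinct
points of `M` is exactly `{1/2, 1/√2}` (so `M` is a two-distance set), and hence
there exists a two-distance set in `ℝ^d` of cardinality `(d+1).choose 2`. -/
theorem stmt_19 (d : ℕ) (hd : 3 ≤ d) (v : Fin (d + 1) → EuclideanSpace ℝ (Fin d))
    (hv : ∀ i j, i ≠ j → dist (v i) (v j) = 1) :
    {m : EuclideanSpace ℝ (Fin d) |
        ∃ i j, i ≠ j ∧ m = midpoint ℝ (v i) (v j)}.ncard = (d + 1) * d / 2 ∧
    {e : ℝ | ∃ p ∈ {m : EuclideanSpace ℝ (Fin d) | ∃ i j, i ≠ j ∧ m = midpoint ℝ (v i) (v j)},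
        ∃ q ∈ {m : EuclideanSpace ℝ (Fin d) | ∃ i j, i ≠ j ∧ m = midpoint ℝ (v i) (v j)},
        p ≠ q ∧ dist p q = e} = {1 / 2, (Real.sqrt 2)⁻¹} ∧
    (∃ X : Set (EuclideanSpace ℝ (Fin d)), X.Finite ∧ X.ncard = (d + 1).choose 2 ∧
      {e : ℝ | ∃ p ∈ X, ∃ q ∈ X, p ≠ q ∧ dist p q = e}.ncard = 2) := by
  set M : Set (EuclideanSpace ℝ (Fin d)) :=
    {m : EuclideanSpace ℝ (Fin d) | ∃ i j, i ≠ j ∧ m = midpoint ℝ (v i) (v j)} with hMdef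
  set f : Sym2 (Fin (d + 1)) → EuclideanSpace ℝ (Fin d) :=
    Sym2.lift ⟨fun i j => midpoint ℝ (v i) (v j), fun i j => midpoint_comm (v i) (v j)⟩
    with hfdef
  have hfeq : ∀ i j, f (Sym2.mk i j) = midpoint ℝ (v i) (v j) := fun i j => rfl
  have hM : M = f '' {s : Sym2 (Fin (d + 1)) | ¬ s.IsDiag} := by
    ext m
    constructor
    · rintro ⟨i, j, hij, rfl⟩
      exact ⟨Sym2.mk i j, by simpa using hij, rfl⟩
    · rintro ⟨s, hs, rfl⟩
      induction s using Sym2.ind with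
      | _ i j =>
        simp only [Set.mem_setOf_eq, Sym2.isDiag_iff_proj_eq] at hs
        exact ⟨i, j, hs, rfl⟩
  have hinj : Set.InjOn f {s : Sym2 (Fin (d + 1)) | ¬ s.IsDiag} := by
    intro s hs t ht hft
    induction s using Sym2.ind with
    | _ i j =>
      induction t using Sym2.ind with
      | _ k l =>
        simp only [Set.mem_setOf_eq, Sym2.isDiag_iff_proj_eq] at hs ht
        by_contra hne
        exact simplex_mid_ne v hv i j k l hs ht hne (by simpa [hfeq] using hft)
  have hcard : M.ncard = (d + 1).choose 2 := by
    rw [hM, Set.ncard_image_of_injOn hinj, ← Nat.card_coe_set_eq,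
      Nat.card_eq_fintype_card]
    have := Sym2.card_subtype_not_diag (α := Fin (d + 1))
    rw [Fintype.card_fin] at this
    rw [← this]; exact Fintype.card_congr (Equiv.refl _)
  -- indices 0,1,2,3
  have h0 : (0 : ℕ) < d + 1 := by omega
  have h1 : (1 : ℕ) < d + 1 := by omega
  have h2 : (2 : ℕ) < d + 1 := by omega
  have h3 : (3 : ℕ) < d + 1 := by omega
  set i0 : Fin (d + 1) := ⟨0, h0⟩
  set i1 : Fin (d + 1) := ⟨1, h1⟩
  set i2 : Fin (d + 1) := ⟨2, h2⟩
  set i3 : Fin (d + 1) := ⟨3, h3⟩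
  have n01 : i0 ≠ i1 := by simp [i0, i1, Fin.ext_iff]
  have n02 : i0 ≠ i2 := by simp [i0, i2, Fin.ext_iff]
  have n03 : i0 ≠ i3 := by simp [i0, i3, Fin.ext_iff]
  have n12 : i1 ≠ i2 := by simp [i1, i2, Fin.ext_iff]
  have n13 : i1 ≠ i3 := by simp [i1, i3, Fin.ext_iff]
  have n23 : i2 ≠ i3 := by simp [i2, i3, Fin.ext_iff]
  have hdistset : {e : ℝ | ∃ p ∈ M, ∃ q ∈ M, p ≠ q ∧ dist p q = e}
      = {1 / 2, (Real.sqrt 2)⁻¹} := by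
    ext e
    constructor
    · rintro ⟨p, ⟨i, j, hij, rfl⟩, q, ⟨k, l, hkl, rfl⟩, hpq, rfl⟩
      have hne : Sym2.mk i j ≠ Sym2.mk k l := by
        intro h
        apply hpq
        rw [Sym2.mk_eq_mk_iff (p := (i, j)) (q := (k, l))] at h
        rcases h with h | h
        · obtain ⟨rfl, rfl⟩ := Prod.mk.inj h
          rfl
        · obtain ⟨rfl, rfl⟩ := Prod.mk.inj h
          rw [midpoint_comm]
      rcases simplex_mid_key v hv i j k l hij hkl hne with h | h
      · exact Or.inl h
      · exact Or.inr h
    · rintro (rfl | rfl)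
      · refine ⟨midpoint ℝ (v i0) (v i1), ⟨i0, i1, n01, rfl⟩,
          midpoint ℝ (v i0) (v i2), ⟨i0, i2, n02, rfl⟩, ?_, ?_⟩
        · apply simplex_mid_ne v hv i0 i1 i0 i2 n01 n02
          intro h
          rw [Sym2.mk_eq_mk_iff (p := (i0, i1)) (q := (i0, i2))] at h
          rcases h with h | h
          · exact n12 (Prod.mk.inj h).2
          · exact n01 ((Prod.mk.inj h).2).symm
        · exact simplex_mid_share v hv i0 i1 i2 n01 n02 n12
      · refine ⟨midpoint ℝ (v i0) (v i1), ⟨i0, i1, n01, rfl⟩,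
          midpoint ℝ (v i2) (v i3), ⟨i2, i3, n23, rfl⟩, ?_, ?_⟩
        · apply simplex_mid_ne v hv i0 i1 i2 i3 n01 n23
          intro h
          rw [Sym2.mk_eq_mk_iff (p := (i0, i1)) (q := (i2, i3))] at h
          rcases h with h | h
          · exact n02 (Prod.mk.inj h).1
          · exact n03 (Prod.mk.inj h).1
        · exact simplex_mid_disj v hv i0 i1 i2 i3 n02 n03 n12 n13 n01 n23
  have hne2 : (1 / 2 : ℝ) ≠ (Real.sqrt 2)⁻¹ := by
    intro h
    have hs : (0:ℝ) < Real.sqrt 2 := by positivity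
    have hsq := Real.sq_sqrt (by norm_num : (0:ℝ) ≤ 2)
    field_simp at h
    nlinarith
  refine ⟨?_, hdistset, M, ?_, hcard, ?_⟩
  · rw [hcard, Nat.choose_two_right]
    simp
  · rw [hM]
    exact (Set.toFinite _).image f
  · rw [hdistset]
    exact Set.ncard_pair hne2
end
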